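/- arXiv:1905.12805 — 10 statements merged into one kernel-verified Lean document; each statement's English description precedes it below -/
import Mathlib

section
/- Let R be a commutative ring, A = ⋀_R(R^n) the exterior algebra over R on n generators θ₁,…,θₙ, N ⊆ A the augmentation ideal generated by θ₁,…,θₙ, and ωₜₒₚ = θ₁·θ₂·⋯·θₙ ∈ A the product of all generators. For any free A-module M of finite rank, the map M → M, m ↦ ωₜₒₚ • m, annihilates N·M, has image contained in M_N = {m ∈ M : a • m = 0 for all a ∈ N}, and the induced R-linear map M/(N·M) → M_N is an isomorphism. -/
namespace Stmt1Aux

variable {R : Type*} [CommRing R] {n : ℕ}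

local notation "A" => ExteriorAlgebra R (Fin n → R)

variable (R n) in
noncomputable def θ (i : Fin n) : A := ExteriorAlgebra.ι R (Pi.single i 1)

variable (R n) in
noncomputable def ωA : A := (List.ofFn (θ R n)).prod

variable (R n) in
noncomputable def Nspan : Ideal A := Ideal.span (Set.range (θ R n))

theorem theta_mem (i : Fin n) : θ R n i ∈ Nspan R n :=
  Ideal.subset_span ⟨i, rfl⟩

theorem theta_mul_omega (i : Fin n) : θ R n i * ωA R n = 0 :=
  ExteriorAlgebra.ι_mul_prod_list (fun j : Fin n => Pi.single j 1) i

theorem prod_mul_anticomm (l : List A) (x : A) (h : ∀ e ∈ l, e * x = -(x * e)) :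
    l.prod * x = ((-1 : ℤ) ^ l.length) • (x * l.prod) := by
  induction l with
  | nil => simp
  | cons e t ih =>
    have he := h e (List.mem_cons_self)
    have ht := ih fun e' he' => h e' (List.mem_cons_of_mem _ he')
    rw [List.prod_cons, List.length_cons, mul_assoc, ht, mul_smul_comm, ← mul_assoc, he,
      neg_mul, mul_assoc, pow_succ, mul_smul, neg_one_smul]

theorem theta_anticomm (i j : Fin n) : θ R n i * θ R n j = -(θ R n j * θ R n i) :=
  by
  unfold θ
  exact eq_neg_of_add_eq_zero_left (ExteriorAlgebra.ι_add_mul_swap _ _)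

theorem omega_mul_theta (i : Fin n) : ωA R n * θ R n i = 0 := by
  have h : ∀ e ∈ List.ofFn (θ R n), e * θ R n i = -(θ R n i * e) := by
    intro e he
    obtain ⟨j, rfl⟩ := List.mem_ofFn.mp he
    exact theta_anticomm j i
  rw [ωA, prod_mul_anticomm _ _ h, show (List.ofFn (θ R n)).prod = ωA R n from rfl,
    theta_mul_omega, smul_zero]

variable (R n) in
noncomputable def ε : A →ₐ[R] R := ExteriorAlgebra.algebraMapInv

theorem eps_iota (v : Fin n → R) : ε R n (ExteriorAlgebra.ι R v) = 0 := by
  simp [ε, ExteriorAlgebra.algebraMapInv]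

theorem iota_eq_sum (v : Fin n → R) :
    (ExteriorAlgebra.ι R v : A) = ∑ i, v i • θ R n i := by
  conv_lhs => rw [← (Pi.basisFun R (Fin n)).sum_repr v]
  rw [map_sum]
  refine Finset.sum_congr rfl fun i _ => ?_
  rw [map_smul, Pi.basisFun_repr, Pi.basisFun_apply, θ]

theorem omega_mul (x : A) :
    ωA R n * x = algebraMap R A (ε R n x) * ωA R n := by
  induction x using ExteriorAlgebra.induction with
  | algebraMap r => simp [Algebra.commutes]
  | ι v =>
    rw [eps_iota, map_zero, zero_mul, iota_eq_sum, Finset.mul_sum]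
    refine Finset.sum_eq_zero fun i _ => ?_
    rw [mul_smul_comm, omega_mul_theta, smul_zero]
  | mul x y hx hy =>
    rw [← mul_assoc, hx, mul_assoc, hy, map_mul, map_mul, ← mul_assoc]
  | add x y hx hy => rw [mul_add, hx, hy, map_add, map_add, add_mul]

theorem sub_eps_mem (x : A) : x - algebraMap R A (ε R n x) ∈ Nspan R n := by
  induction x using ExteriorAlgebra.induction with
  | algebraMap r => simp
  | ι v =>
    rw [eps_iota, map_zero, sub_zero, iota_eq_sum]
    exact Submodule.sum_mem _ fun i _ => Submodule.smul_of_tower_mem _ _ (theta_mem i)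
  | mul x y hx hy =>
    have hxy : x * y - algebraMap R A (ε R n (x * y)) =
        x * (y - algebraMap R A (ε R n y)) +
          (x - algebraMap R A (ε R n x)) * algebraMap R A (ε R n y) := by
      rw [map_mul, map_mul]; noncomm_ring
    rw [hxy]
    refine Submodule.add_mem _ (Ideal.mul_mem_left _ _ hy) ?_
    rw [← Algebra.commutes]
    exact Ideal.mul_mem_left _ _ hx
  | add x y hx hy =>
    have hxy : x + y - algebraMap R A (ε R n (x + y)) =
        (x - algebraMap R A (ε R n x)) + (y - algebraMap R A (ε R n y)) := by
      rw [map_add, map_add]; noncomm_ring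
    rw [hxy]; exact Submodule.add_mem _ hx hy

theorem eps_zero_of_mem {a : A} (ha : a ∈ Nspan R n) : ε R n a = 0 := by
  rw [Nspan, Ideal.span] at ha
  induction ha using Submodule.span_induction with
  | mem a ha => obtain ⟨i, rfl⟩ := ha; exact eps_iota _
  | zero => exact map_zero _
  | add x y _ _ hx hy => rw [map_add, hx, hy, add_zero]
  | smul c x _ hx => rw [smul_eq_mul, map_mul, hx, mul_zero]

theorem mem_of_eps_zero {a : A} (ha : ε R n a = 0) : a ∈ Nspan R n := by
  have := sub_eps_mem (n := n) a
  rwa [ha, map_zero, sub_zero] at this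

theorem omega_mul_mem {a : A} (ha : a ∈ Nspan R n) : ωA R n * a = 0 := by
  rw [omega_mul, eps_zero_of_mem ha, map_zero, zero_mul]

theorem mem_mul_omega {a : A} (ha : a ∈ Nspan R n) : a * ωA R n = 0 := by
  rw [Nspan, Ideal.span] at ha
  induction ha using Submodule.span_induction with
  | mem a ha => obtain ⟨i, rfl⟩ := ha; exact theta_mul_omega _
  | zero => exact zero_mul _
  | add x y _ _ hx hy => rw [add_mul, hx, hy, add_zero]
  | smul c x _ hx => rw [smul_eq_mul, mul_assoc, hx, mul_zero]


variable (R n) in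
noncomputable def ctr (i : Fin n) : A →ₗ[R] A :=
  CliffordAlgebra.contractLeft (Q := (0 : QuadraticForm R (Fin n → R)))
    (LinearMap.proj i)

theorem ctr_theta_mul (i j : Fin n) (x : A) :
    ctr R n i (θ R n j * x) = ((Pi.single j (1 : R) : Fin n → R) i) • x - θ R n j * ctr R n i x :=
  CliffordAlgebra.contractLeft_ι_mul _ _ _

theorem ctr_theta_mul_self (i : Fin n) (x : A) :
    ctr R n i (θ R n i * x) = x - θ R n i * ctr R n i x := by
  rw [ctr_theta_mul, Pi.single_eq_same, one_smul]

theorem ctr_theta_mul_ne {i j : Fin n} (hij : j ≠ i) (x : A) :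
    ctr R n i (θ R n j * x) = -(θ R n j * ctr R n i x) := by
  rw [ctr_theta_mul, Pi.single_eq_of_ne hij.symm, zero_smul, zero_sub]

theorem ctr_one (i : Fin n) : ctr R n i (1 : A) = 0 :=
  CliffordAlgebra.contractLeft_one _ _

theorem ctr_prod_eq_zero {i : Fin n} {t : List (Fin n)} (h : i ∉ t) :
    ctr R n i ((t.map (θ R n)).prod) = 0 := by
  induction t with
  | nil => simpa using ctr_one (R := R) i
  | cons j s ih =>
    have hji : j ≠ i := fun hj => h (hj ▸ List.mem_cons_self)
    rw [List.map_cons, List.prod_cons, ctr_theta_mul_ne hji,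
      ih (fun hs => h (List.mem_cons_of_mem _ hs)), mul_zero, neg_zero]

theorem exists_factor (l : List (Fin n)) (hl : l.Nodup) :
    ∀ x : A, (∀ j ∈ l, θ R n j * x = 0) → ∃ y : A, x = (l.map (θ R n)).prod * y := by
  induction l with
  | nil => exact fun x _ => ⟨x, by simp⟩
  | cons i t ih =>
    intro x hx
    obtain ⟨hit, hnd⟩ := List.nodup_cons.mp hl
    have h1 : x = θ R n i * ctr R n i x := by
      have h := ctr_theta_mul_self (R := R) i x
      rw [hx i (List.mem_cons_self), map_zero] at h
      exact sub_eq_zero.mp h.symm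
    have h2 : ∀ j ∈ t, θ R n j * ctr R n i x = 0 := by
      intro j hj
      have hji : j ≠ i := fun hj' => hit (hj' ▸ hj)
      have h := ctr_theta_mul_ne (R := R) hji x
      rw [hx j (List.mem_cons_of_mem _ hj), map_zero, eq_comm, neg_eq_zero] at h
      exact h
    obtain ⟨y, hy⟩ := ih hnd _ h2
    exact ⟨y, by rw [h1, hy, List.map_cons, List.prod_cons, mul_assoc]⟩

variable (R n) in
noncomputable def ctrFold : List (Fin n) → A → A
  | [], x => x
  | i :: t, x => ctrFold t (ctr R n i x)

theorem ctrFold_smul (l : List (Fin n)) (r : R) (x : A) :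
    ctrFold R n l (r • x) = r • ctrFold R n l x := by
  induction l generalizing x with
  | nil => rfl
  | cons i t ih => rw [ctrFold, ctrFold, map_smul, ih]

theorem ctrFold_zero (l : List (Fin n)) : ctrFold R n l (0 : A) = 0 := by
  induction l with
  | nil => rfl
  | cons i t ih => rw [ctrFold, map_zero, ih]

theorem ctrFold_prod (l : List (Fin n)) (hl : l.Nodup) :
    ctrFold R n l ((l.map (θ R n)).prod) = 1 := by
  induction l with
  | nil => rfl
  | cons i t ih =>
    obtain ⟨hit, hnd⟩ := List.nodup_cons.mp hl
    rw [List.map_cons, List.prod_cons, ctrFold, ctr_theta_mul_self,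
      ctr_prod_eq_zero hit, mul_zero, sub_zero, ih hnd]

theorem omega_torsionfree (r : R)
    (h : algebraMap R A r * (List.ofFn (θ R n)).prod = 0) : r = 0 := by
  have h1 : (r • (List.ofFn (θ R n)).prod : A) = 0 := by
    rwa [Algebra.smul_def]
  have h2 := congrArg (ctrFold R n (List.finRange n)) h1
  rw [ctrFold_smul, ctrFold_zero, List.ofFn_eq_map, ctrFold_prod _ (List.nodup_finRange n)] at h2
  have h3 : algebraMap R A r = 0 := by rw [Algebra.algebraMap_eq_smul_one]; exact h2
  exact (ExteriorAlgebra.algebraMap_eq_zero_iff _ _).mp h3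


end Stmt1Aux

/-- Let `A = ⋀_R(R^n)` be the exterior algebra over a commutative ring `R` on
`n` generators `θ₁, …, θₙ`, let `N ⊆ A` be the ideal generated by `θ₁, …, θₙ`, and let
`ω = θ₁ ⋯ θₙ` be the product of all generators.  For any free `A`-module `M` of finite rank
(i.e. admitting a finite basis, equivalently isomorphic to some `A^k`), the map `m ↦ ω • m`
annihilates `N • M`, has image contained in the annihilator `M_N = {m | ∀ a ∈ N, a • m = 0}`
of `N`, and induces an isomorphism `M/(N • M) ≃ M_N`; the latter is expressed by saying that
the map `m ↦ ω • m` is surjective onto `M_N` and its kernel is exactly `N • M`. -/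
theorem stmt_1 {R : Type*} [CommRing R] (n : ℕ)
    {M : Type*} [AddCommGroup M] [Module (ExteriorAlgebra R (Fin n → R)) M]
    (k : ℕ) (bM : Module.Basis (Fin k) (ExteriorAlgebra R (Fin n → R)) M)
    (N : Ideal (ExteriorAlgebra R (Fin n → R)))
    (hN : N = Ideal.span (Set.range fun i : Fin n =>
      ExteriorAlgebra.ι R (Pi.single i (1 : R))))
    (ω : ExteriorAlgebra R (Fin n → R))
    (hω : ω = (List.ofFn fun i : Fin n => ExteriorAlgebra.ι R (Pi.single i (1 : R))).prod) :
    (∀ m ∈ N • (⊤ : Submodule (ExteriorAlgebra R (Fin n → R)) M), ω • m = 0) ∧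
    (∀ m : M, ∀ a ∈ N, a • (ω • m) = 0) ∧
    (∀ m' : M, (∀ a ∈ N, a • m' = 0) → ∃ m : M, ω • m = m') ∧
    (∀ m : M, ω • m = 0 → m ∈ N • (⊤ : Submodule (ExteriorAlgebra R (Fin n → R)) M)) := by
  have hN' : N = Stmt1Aux.Nspan R n := hN
  have hω' : ω = Stmt1Aux.ωA R n := hω
  subst hN' hω'
  refine ⟨?_, ?_, ?_, ?_⟩
  · intro m hm
    refine Submodule.smul_induction_on hm (fun a ha x _ => ?_)
      (fun x y hx hy => by rw [smul_add, hx, hy, add_zero])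
    rw [smul_smul, Stmt1Aux.omega_mul_mem ha, zero_smul]
  · intro m a ha
    rw [smul_smul, Stmt1Aux.mem_mul_omega ha, zero_smul]
  · intro m' hm'
    have hθ : ∀ (i : Fin n) (j : Fin k), Stmt1Aux.θ R n i * bM.repr m' j = 0 := by
      intro i j
      have h1 : Stmt1Aux.θ R n i • m' = 0 := hm' _ (Stmt1Aux.theta_mem i)
      have h2 := congrArg (fun z => bM.repr z j) h1
      simpa using h2
    have hsoc : ∀ j : Fin k, ∃ r : R,
        bM.repr m' j = algebraMap R _ r * Stmt1Aux.ωA R n := by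
      intro j
      obtain ⟨y, hy⟩ := Stmt1Aux.exists_factor (List.finRange n) (List.nodup_finRange n)
        (bM.repr m' j) (fun i _ => hθ i j)
      refine ⟨Stmt1Aux.ε R n y, ?_⟩
      rw [hy, ← List.ofFn_eq_map]
      exact Stmt1Aux.omega_mul y
    choose r hr using hsoc
    refine ⟨∑ j, (algebraMap R (ExteriorAlgebra R (Fin n → R)) (r j)) • bM j, ?_⟩
    rw [Finset.smul_sum]
    have hterm : ∀ j ∈ Finset.univ,
        Stmt1Aux.ωA R n • (algebraMap R (ExteriorAlgebra R (Fin n → R)) (r j) • bM j) = bM.repr m' j • bM j := by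
      intro j _
      rw [smul_smul, ← Algebra.commutes, ← hr j]
    rw [Finset.sum_congr rfl hterm, Module.Basis.sum_repr]
  · intro m hm
    have hj : ∀ j : Fin k, bM.repr m j ∈ Stmt1Aux.Nspan R n := by
      intro j
      have h2 := congrArg (fun z => bM.repr z j) hm
      simp only [map_smul, Finsupp.smul_apply, smul_eq_mul, map_zero,
        Finsupp.coe_zero, Pi.zero_apply] at h2
      have h3 : algebraMap R _ (Stmt1Aux.ε R n (bM.repr m j)) * Stmt1Aux.ωA R n = 0 := by
        rw [← Stmt1Aux.omega_mul]; exact h2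
      exact Stmt1Aux.mem_of_eps_zero (Stmt1Aux.omega_torsionfree _ h3)
    rw [← Module.Basis.sum_repr bM m]
    exact Submodule.sum_mem _ fun j _ => Submodule.smul_mem_smul (hj j) Submodule.mem_top
end

section
/- Let (R, 𝔪) be a commutative local ring and F a b × a matrix with entries in R. Then there exist natural numbers r, a', b' with a = a' + r and b = b' + r, and invertible matrices P ∈ GLᵦ(R) and Q ∈ GLₐ(R), such that P · F · Q is the block-diagonal matrix with blocks the r × r identity matrix and a b' × a' matrix G all of whose entries lie in 𝔪. (This is the commutative local-ring form of the reduction of a two-term complex of vector bundles to a quasi-isomorphic complex whose differential vanishes at the closed point.) -/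
open Matrix

section Aux

variable {R : Type*} [CommRing R]

/-- The block-diagonal matrix `[[1, 0], [0, G]]`, reindexed to `Fin b × Fin a`. -/
def blk {a b r a' b' : ℕ} (hb : b = r + b') (ha : a = r + a')
    (G : Matrix (Fin b') (Fin a') R) : Matrix (Fin b) (Fin a) R :=
  Matrix.reindex (finSumFinEquiv.trans (finCongr hb.symm))
    (finSumFinEquiv.trans (finCongr ha.symm))
    (Matrix.fromBlocks (1 : Matrix (Fin r) (Fin r) R) 0 0 G)

lemma esymm_lt {n r n' : ℕ} (h : n = r + n') (i : Fin n) (hi : (i : ℕ) < r) :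
    (finSumFinEquiv.trans (finCongr h.symm)).symm i = Sum.inl ⟨i, hi⟩ := by
  rw [Equiv.symm_apply_eq]
  ext
  simp [finSumFinEquiv_apply_left]

lemma esymm_ge {n r n' : ℕ} (h : n = r + n') (i : Fin n) (hi : ¬ (i : ℕ) < r) :
    (finSumFinEquiv.trans (finCongr h.symm)).symm i
      = Sum.inr ⟨(i : ℕ) - r, by have := i.isLt; omega⟩ := by
  rw [Equiv.symm_apply_eq]
  ext
  have := i.isLt
  simp [finSumFinEquiv_apply_right]
  omega

lemma blk_apply {a b r a' b' : ℕ} (hb : b = r + b') (ha : a = r + a')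
    (G : Matrix (Fin b') (Fin a') R) (i : Fin b) (j : Fin a) :
    blk hb ha G i j =
      if hi : (i : ℕ) < r then (if (i : ℕ) = (j : ℕ) then 1 else 0)
      else if hj : (j : ℕ) < r then 0
      else G ⟨(i : ℕ) - r, by have := i.isLt; omega⟩
        ⟨(j : ℕ) - r, by have := j.isLt; omega⟩ := by
  unfold blk
  rw [Matrix.reindex_apply, Matrix.submatrix_apply]
  by_cases hi : (i : ℕ) < r <;> by_cases hj : (j : ℕ) < r
  · rw [esymm_lt hb i hi, esymm_lt ha j hj, dif_pos hi]
    simp [Matrix.one_apply, Fin.ext_iff]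
  · rw [esymm_lt hb i hi, esymm_ge ha j hj, dif_pos hi]
    simp only [Matrix.fromBlocks_apply₁₂, Matrix.zero_apply]
    rw [if_neg (by omega)]
  · rw [esymm_ge hb i hi, esymm_lt ha j hj, dif_neg hi, dif_pos hj]
    simp
  · rw [esymm_ge hb i hi, esymm_ge ha j hj, dif_neg hi, dif_neg hj]
    simp

lemma blk_mul {a b c r a' b' c' : ℕ} (hb : b = r + b') (hc : c = r + c') (ha : a = r + a')
    (M : Matrix (Fin b') (Fin c') R) (N : Matrix (Fin c') (Fin a') R) :
    blk hb hc M * blk hc ha N = blk hb ha (M * N) := by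
  unfold blk
  rw [Matrix.reindex_apply, Matrix.reindex_apply, Matrix.reindex_apply,
    Matrix.submatrix_mul_equiv, Matrix.fromBlocks_multiply]
  simp

lemma blk_one {b r b' : ℕ} (hb : b = r + b') :
    blk hb hb (1 : Matrix (Fin b') (Fin b') R) = 1 := by
  unfold blk
  rw [Matrix.fromBlocks_one, Matrix.reindex_apply, Matrix.submatrix_one_equiv]

/-- Lift an invertible matrix to a bigger invertible block-diagonal matrix. -/
def blkUnit {b r b' : ℕ} (hb : b = r + b') (P : (Matrix (Fin b') (Fin b') R)ˣ) :
    (Matrix (Fin b) (Fin b) R)ˣ :=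
  ⟨blk hb hb P.val, blk hb hb (↑P⁻¹ : Matrix (Fin b') (Fin b') R),
    by rw [blk_mul, Units.mul_inv, blk_one],
    by rw [blk_mul, Units.inv_mul, blk_one]⟩

@[simp] lemma blkUnit_val {b r b' : ℕ} (hb : b = r + b') (P : (Matrix (Fin b') (Fin b') R)ˣ) :
    (blkUnit hb P).val = blk hb hb P.val := rfl

lemma blk_nest {a b s m n t a' b' : ℕ} (hb : b = s + m) (ha : a = s + n)
    (hm : m = t + b') (hn : n = t + a') (G : Matrix (Fin b') (Fin a') R) :
    blk hb ha (blk hm hn G)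
      = blk (show b = (s + t) + b' by omega) (show a = (s + t) + a' by omega) G := by
  ext i j
  have hib := i.isLt
  have hja := j.isLt
  simp only [blk_apply]
  split_ifs <;>
    first
      | rfl
      | omega
      | (congr 1 <;> exact Fin.ext (by simp <;> omega))

/-- Permutation matrices as units. -/
def permUnit {n : ℕ} (σ : Equiv.Perm (Fin n)) : (Matrix (Fin n) (Fin n) R)ˣ :=
  ⟨(σ.toPEquiv.toMatrix : Matrix (Fin n) (Fin n) R), σ.symm.toPEquiv.toMatrix,
    by rw [← PEquiv.toMatrix_trans, ← Equiv.toPEquiv_trans, Equiv.self_trans_symm,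
      Equiv.toPEquiv_refl, PEquiv.toMatrix_refl],
    by rw [← PEquiv.toMatrix_trans, ← Equiv.toPEquiv_trans, Equiv.symm_trans_self,
      Equiv.toPEquiv_refl, PEquiv.toMatrix_refl]⟩

lemma reindex_mul {l m n l' m' n' : Type*} [Fintype m] [Fintype m']
    (e1 : l ≃ l') (e2 : m ≃ m') (e3 : n ≃ n') (M : Matrix l m R) (N : Matrix m n R) :
    Matrix.reindex e1 e2 M * Matrix.reindex e2 e3 N = Matrix.reindex e1 e3 (M * N) := by
  rw [Matrix.reindex_apply, Matrix.reindex_apply, Matrix.reindex_apply,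
    Matrix.submatrix_mul_equiv]

/-- Transport a unit along a reindexing. -/
def reindexUnit {m n : Type*} [Fintype m] [Fintype n] [DecidableEq m] [DecidableEq n]
    (e : m ≃ n) (X : (Matrix m m R)ˣ) : (Matrix n n R)ˣ :=
  ⟨Matrix.reindex e e X.val, Matrix.reindex e e (↑X⁻¹ : Matrix m m R),
    by rw [reindex_mul, Units.mul_inv, Matrix.reindex_apply, Matrix.submatrix_one_equiv],
    by rw [reindex_mul, Units.inv_mul, Matrix.reindex_apply, Matrix.submatrix_one_equiv]⟩

lemma units_conj_cancel {m n : Type*} [Fintype m] [Fintype n] [DecidableEq m] [DecidableEq n]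
    (u : (Matrix m m R)ˣ) (v : (Matrix n n R)ˣ) (x : Matrix m n R) :
    (↑u⁻¹ : Matrix m m R) * ((↑u : Matrix m m R) * x * (↑v : Matrix n n R))
      * (↑v⁻¹ : Matrix n n R) = x := by
  rw [Matrix.mul_assoc (u.val) x v.val, ← Matrix.mul_assoc (↑u⁻¹ : Matrix m m R) u.val _,
    Units.inv_mul, Matrix.one_mul, Matrix.mul_assoc x v.val, Units.mul_inv, Matrix.mul_one]

lemma pivot {b a : ℕ} (F : Matrix (Fin (b + 1)) (Fin (a + 1)) R)
    (i0 : Fin (b + 1)) (j0 : Fin (a + 1)) (hu : IsUnit (F i0 j0)) :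
    ∃ (P : (Matrix (Fin (b + 1)) (Fin (b + 1)) R)ˣ)
      (Q : (Matrix (Fin (a + 1)) (Fin (a + 1)) R)ˣ)
      (S : Matrix (Fin b) (Fin a) R),
      (P : Matrix (Fin (b + 1)) (Fin (b + 1)) R) * F * (Q : Matrix (Fin (a + 1)) (Fin (a + 1)) R)
        = blk (show b + 1 = 1 + b by omega) (show a + 1 = 1 + a by omega) S := by
  set e : Equiv.Perm (Fin (b + 1)) := Equiv.swap 0 i0 with he
  set f : Equiv.Perm (Fin (a + 1)) := Equiv.swap 0 j0 with hf
  set eb : Fin 1 ⊕ Fin b ≃ Fin (b + 1) :=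
    finSumFinEquiv.trans (finCongr (show b + 1 = 1 + b by omega).symm) with heb
  set ea : Fin 1 ⊕ Fin a ≃ Fin (a + 1) :=
    finSumFinEquiv.trans (finCongr (show a + 1 = 1 + a by omega).symm) with hea
  set M : Matrix (Fin 1 ⊕ Fin b) (Fin 1 ⊕ Fin a) R := (F.submatrix e f).submatrix eb ea with hM
  set A := M.toBlocks₁₁ with hA
  set B := M.toBlocks₁₂ with hB
  set C := M.toBlocks₂₁ with hC
  set D := M.toBlocks₂₂ with hD
  obtain ⟨u, hu⟩ := hu
  have heb0 : eb (Sum.inl 0) = (0 : Fin (b + 1)) := by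
    apply Fin.ext
    simp [heb, finSumFinEquiv_apply_left]
  have hea0 : ea (Sum.inl 0) = (0 : Fin (a + 1)) := by
    apply Fin.ext
    simp [hea, finSumFinEquiv_apply_left]
  have hA' : A = (F i0 j0) • (1 : Matrix (Fin 1) (Fin 1) R) := by
    ext x y
    fin_cases x; fin_cases y
    simp [hA, Matrix.toBlocks₁₁, hM, heb0, hea0, he, hf, Equiv.swap_apply_left,
      Matrix.one_apply]
  have hinvA : Invertible A := by
    refine ⟨(↑u⁻¹ : R) • 1, ?_, ?_⟩
    · rw [hA', ← hu, smul_mul_smul_comm, Units.inv_mul, one_smul, one_mul]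
    · rw [hA', ← hu, smul_mul_smul_comm, Units.mul_inv, one_smul, one_mul]
  letI := hinvA
  have hMblocks : M = Matrix.fromBlocks A B C D := by
    rw [hA, hB, hC, hD, Matrix.fromBlocks_toBlocks]
  have key := Matrix.fromBlocks_eq_of_invertible₁₁ A B C D
  set S := D - C * ⅟A * B with hSdef
  letI : Invertible (1 : Matrix (Fin 1) (Fin 1) R) := invertibleOne
  letI : Invertible (1 : Matrix (Fin b) (Fin b) R) := invertibleOne
  letI : Invertible (1 : Matrix (Fin a) (Fin a) R) := invertibleOne
  letI iU : Invertible (Matrix.fromBlocks (1 : Matrix (Fin 1) (Fin 1) R) 0 (C * ⅟A) 1) :=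
    Matrix.fromBlocksZero₁₂Invertible (1 : Matrix (Fin 1) (Fin 1) R) (C * ⅟A)
      (1 : Matrix (Fin b) (Fin b) R)
  letI iV : Invertible (Matrix.fromBlocks (1 : Matrix (Fin 1) (Fin 1) R) (⅟A * B) 0 1) :=
    Matrix.fromBlocksZero₂₁Invertible (1 : Matrix (Fin 1) (Fin 1) R) (⅟A * B)
      (1 : Matrix (Fin a) (Fin a) R)
  letI iW : Invertible (Matrix.fromBlocks A 0 0 (1 : Matrix (Fin b) (Fin b) R)) :=
    Matrix.fromBlocksZero₂₁Invertible A (0 : Matrix (Fin 1) (Fin b) R)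
      (1 : Matrix (Fin b) (Fin b) R)
  set U : (Matrix (Fin 1 ⊕ Fin b) (Fin 1 ⊕ Fin b) R)ˣ :=
    unitOfInvertible (Matrix.fromBlocks (1 : Matrix (Fin 1) (Fin 1) R) 0 (C * ⅟A)
      (1 : Matrix (Fin b) (Fin b) R)) with hU
  set V : (Matrix (Fin 1 ⊕ Fin a) (Fin 1 ⊕ Fin a) R)ˣ :=
    unitOfInvertible (Matrix.fromBlocks (1 : Matrix (Fin 1) (Fin 1) R) (⅟A * B) 0
      (1 : Matrix (Fin a) (Fin a) R)) with hV
  set W : (Matrix (Fin 1 ⊕ Fin b) (Fin 1 ⊕ Fin b) R)ˣ :=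
    unitOfInvertible (Matrix.fromBlocks A 0 0 (1 : Matrix (Fin b) (Fin b) R)) with hW
  have hWS : Matrix.fromBlocks A 0 0 S
      = (W : Matrix (Fin 1 ⊕ Fin b) (Fin 1 ⊕ Fin b) R) * Matrix.fromBlocks (1 : Matrix (Fin 1) (Fin 1) R) 0 0 S := by
    have hWval : (W : Matrix (Fin 1 ⊕ Fin b) (Fin 1 ⊕ Fin b) R) = Matrix.fromBlocks A 0 0 (1 : Matrix (Fin b) (Fin b) R) :=
      rfl
    rw [hWval, Matrix.fromBlocks_multiply]
    simp
  have hUval : U.val = Matrix.fromBlocks (1 : Matrix (Fin 1) (Fin 1) R) 0 (C * ⅟A) 1 := rfl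
  have hVval : V.val = Matrix.fromBlocks (1 : Matrix (Fin 1) (Fin 1) R) (⅟A * B) 0 1 := rfl
  have hMfact : M = (U * W).val
      * Matrix.fromBlocks (1 : Matrix (Fin 1) (Fin 1) R) 0 0 S * V.val := by
    rw [hMblocks, key, hWS, Units.val_mul, hUval, hVval, ← Matrix.mul_assoc]
  have hblocks : Matrix.fromBlocks (1 : Matrix (Fin 1) (Fin 1) R) 0 0 S
      = (↑(U * W)⁻¹ : Matrix (Fin 1 ⊕ Fin b) (Fin 1 ⊕ Fin b) R) * M * (↑V⁻¹ : Matrix (Fin 1 ⊕ Fin a) (Fin 1 ⊕ Fin a) R) := by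
    rw [hMfact]
    exact (units_conj_cancel (U * W) V _).symm
  refine ⟨reindexUnit eb (U * W)⁻¹ * permUnit e, permUnit f * reindexUnit ea V⁻¹, S, ?_⟩
  have hperm : (permUnit (R := R) e).val * F * (permUnit (R := R) f).val = F.submatrix ⇑e ⇑f := by
    show e.toPEquiv.toMatrix * F * f.toPEquiv.toMatrix = _
    rw [PEquiv.toMatrix_toPEquiv_mul, PEquiv.mul_toMatrix_toPEquiv, Matrix.submatrix_submatrix]
    rw [show f.symm = f from by rw [hf]; exact Equiv.symm_swap _ _]
    rfl
  have hFM : Matrix.reindex eb ea M = F.submatrix ⇑e ⇑f := by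
    rw [hM]
    ext i j
    simp [Matrix.reindex_apply, Matrix.submatrix_apply, Equiv.apply_symm_apply]
  have step1 : (permUnit (R := R) e).val * F * (permUnit (R := R) f).val = Matrix.reindex eb ea M :=
    hperm.trans hFM.symm
  rw [Units.val_mul, Units.val_mul]
  rw [← Matrix.mul_assoc _ (permUnit f).val (reindexUnit ea V⁻¹).val,
    Matrix.mul_assoc (reindexUnit eb (U * W)⁻¹).val (permUnit e).val F,
    Matrix.mul_assoc (reindexUnit eb (U * W)⁻¹).val ((permUnit e).val * F) (permUnit f).val,
    step1]
  show Matrix.reindex eb eb (↑(U * W)⁻¹ : Matrix (Fin 1 ⊕ Fin b) (Fin 1 ⊕ Fin b) R) * Matrix.reindex eb ea M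
      * Matrix.reindex ea ea (↑V⁻¹ : Matrix (Fin 1 ⊕ Fin a) (Fin 1 ⊕ Fin a) R) = _
  rw [reindex_mul, reindex_mul, ← hblocks]
  rfl

theorem helper {R : Type*} [CommRing R] [IsLocalRing R] (a : ℕ) :
    ∀ (b : ℕ) (F : Matrix (Fin b) (Fin a) R),
    ∃ (r a' b' : ℕ) (ha : a = r + a') (hb : b = r + b')
      (P : (Matrix (Fin b) (Fin b) R)ˣ) (Q : (Matrix (Fin a) (Fin a) R)ˣ)
      (G : Matrix (Fin b') (Fin a') R),
      (∀ i j, G i j ∈ IsLocalRing.maximalIdeal R) ∧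
      (P : Matrix (Fin b) (Fin b) R) * F * (Q : Matrix (Fin a) (Fin a) R) = blk hb ha G := by
  induction a using Nat.strong_induction_on with
  | _ a IH =>
  intro b F
  by_cases hF : ∀ i j, F i j ∈ IsLocalRing.maximalIdeal R
  · refine ⟨0, a, b, (Nat.zero_add a).symm, (Nat.zero_add b).symm, 1, 1, F, hF, ?_⟩
    simp only [Units.val_one, Matrix.one_mul, Matrix.mul_one]
    ext i j
    rw [blk_apply, dif_neg (by omega), dif_neg (by omega)]
    exact congrArg₂ F (Fin.ext (show (i : ℕ) = (i : ℕ) - 0 by omega))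
      (Fin.ext (show (j : ℕ) = (j : ℕ) - 0 by omega))
  · push_neg at hF
    obtain ⟨i0, j0, h0⟩ := hF
    have hu : IsUnit (F i0 j0) := by
      by_contra hc
      exact h0 ((IsLocalRing.mem_maximalIdeal _).mpr hc)
    obtain _ | a₁ := a
    · exact j0.elim0
    obtain _ | b₁ := b
    · exact i0.elim0
    obtain ⟨P₁, Q₁, S, hS⟩ := pivot F i0 j0 hu
    obtain ⟨r', a', b', ha', hb', P₂, Q₂, G, hG, hPQ⟩ := IH a₁ (by omega) b₁ S
    refine ⟨1 + r', a', b', by omega, by omega,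
      blkUnit (show b₁ + 1 = 1 + b₁ by omega) P₂ * P₁,
      Q₁ * blkUnit (show a₁ + 1 = 1 + a₁ by omega) Q₂, G, hG, ?_⟩
    rw [Units.val_mul, Units.val_mul]
    have assoc : (blkUnit (show b₁ + 1 = 1 + b₁ by omega) P₂).val * P₁.val * F
          * (Q₁.val * (blkUnit (show a₁ + 1 = 1 + a₁ by omega) Q₂).val)
        = (blkUnit (show b₁ + 1 = 1 + b₁ by omega) P₂).val * (P₁.val * F * Q₁.val)
          * (blkUnit (show a₁ + 1 = 1 + a₁ by omega) Q₂).val := by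
      simp only [Matrix.mul_assoc]
    rw [assoc, hS, blkUnit_val, blkUnit_val, blk_mul, blk_mul, hPQ, blk_nest]

end Aux

/-- over a commutative local ring `(R, 𝔪)`, any `b × a` matrix `F` can be brought,
by multiplication with invertible matrices `P`, `Q` on the two sides, to a block-diagonal form
with blocks the `r × r` identity matrix and a `b' × a'` matrix `G` whose entries all lie in the
maximal ideal `𝔪` (where `a = r + a'` and `b = r + b'`). -/
theorem stmt_2 {R : Type*} [CommRing R] [IsLocalRing R] (a b : ℕ)
    (F : Matrix (Fin b) (Fin a) R) :
    ∃ (r a' b' : ℕ) (ha : a = r + a') (hb : b = r + b')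
      (P : (Matrix (Fin b) (Fin b) R)ˣ) (Q : (Matrix (Fin a) (Fin a) R)ˣ)
      (G : Matrix (Fin b') (Fin a') R),
      (∀ i j, G i j ∈ IsLocalRing.maximalIdeal R) ∧
      (P : Matrix (Fin b) (Fin b) R) * F * (Q : Matrix (Fin a) (Fin a) R) =
        Matrix.reindex (finSumFinEquiv.trans (finCongr hb.symm))
          (finSumFinEquiv.trans (finCongr ha.symm))
          (Matrix.fromBlocks (1 : Matrix (Fin r) (Fin r) R) 0 0 G) := by
  obtain ⟨r, a', b', ha, hb, P, Q, G, hG, heq⟩ := helper a b F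
  exact ⟨r, a', b', ha, hb, P, Q, G, hG, heq⟩
end

section
/- Let (R, 𝔪) be a commutative local ring and f : R^a → R^b an R-linear map. If the cokernel of f is a free R-module, then for every x ∈ R^a with f(x) ∈ 𝔪·R^b one has f(x) ∈ 𝔪·f(R^a) + 𝔪²·R^b. (This is the commutative local-ring form of the statement that if the first cohomology sheaf of a two-term complex of vector bundles is locally free at a point, then the obstruction map κ at that point vanishes.) -/
/-- let `(R, 𝔪)` be a commutative local ring and `f : R^a → R^b` an `R`-linear
map.  If `coker f` is a free `R`-module, then for every `x ∈ R^a` with `f x ∈ 𝔪 • R^b` one has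
`f x ∈ 𝔪 • range f + 𝔪² • R^b`. -/
theorem stmt_3 {R : Type*} [CommRing R] [IsLocalRing R] (a b : ℕ)
    (f : (Fin a → R) →ₗ[R] (Fin b → R))
    (hfree : Module.Free R ((Fin b → R) ⧸ LinearMap.range f)) :
    ∀ x : Fin a → R,
      f x ∈ IsLocalRing.maximalIdeal R • (⊤ : Submodule R (Fin b → R)) →
      f x ∈ IsLocalRing.maximalIdeal R • LinearMap.range f ⊔
        (IsLocalRing.maximalIdeal R) ^ 2 • (⊤ : Submodule R (Fin b → R)) := by
  intro x hx
  set N := LinearMap.range f with hN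
  have hproj : Module.Projective R ((Fin b → R) ⧸ N) := Module.Projective.of_free
  obtain ⟨s, hs⟩ := Module.projective_lifting_property N.mkQ LinearMap.id
    (Submodule.mkQ_surjective N)
  set r : (Fin b → R) →ₗ[R] (Fin b → R) := LinearMap.id - s ∘ₗ N.mkQ with hr
  have hr_range : ∀ y, r y ∈ N := by
    intro y
    have h0 : N.mkQ (r y) = 0 := by
      have := LinearMap.congr_fun hs (N.mkQ y)
      simp only [LinearMap.comp_apply, LinearMap.id_apply] at this
      rw [hr]
      simp only [LinearMap.sub_apply, map_sub, LinearMap.comp_apply, LinearMap.id_apply]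
      rw [this, sub_self]
    rwa [← LinearMap.mem_ker, Submodule.ker_mkQ] at h0
  have hfix : r (f x) = f x := by
    have hmem : f x ∈ N := ⟨x, rfl⟩
    have h0 : N.mkQ (f x) = 0 := (Submodule.Quotient.mk_eq_zero N).2 hmem
    simp [hr, LinearMap.sub_apply, h0]
  have key : f x ∈ IsLocalRing.maximalIdeal R • N := by
    have : f x ∈ (IsLocalRing.maximalIdeal R • (⊤ : Submodule R (Fin b → R))).map r :=
      ⟨f x, hx, hfix⟩
    rw [Submodule.map_smul''] at this
    refine Submodule.smul_mono le_rfl ?_ this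
    rintro y ⟨z, -, rfl⟩
    exact hr_range z
  exact Submodule.mem_sup_left key
end

section
/- Let R be a commutative local ring, let Q• and P• be bounded cochain complexes of finitely generated free R-modules, and let φ : Q• → P• be a quasi-isomorphism of complexes. Then for every f ∈ R, the chain map f·id on Q• is null-homotopic if and only if the chain map f·id on P• is null-homotopic. (Quasi-isomorphism invariance of the homotopy-annihilator ideal of a complex.) -/
open CategoryTheory
open CategoryTheory.Limits

namespace Stmt5Aux

variable {C : Type*} [Category C] [Abelian C]


/-- Descending construction of a contracting homotopy for a bounded-above acyclic complex of
projectives: at each degree `i` we record `(h_i : X i ⟶ X (i-1), h_{i+1} : X (i+1) ⟶ X i)`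
satisfying the homotopy identity at degree `i`. -/
noncomputable def ffAux (K : CochainComplex C ℤ) (T : ℤ)
    (hT : ∀ i, T ≤ i → IsZero (K.X i))
    (hproj : ∀ i, Projective (K.X i)) (hex : ∀ i, K.ExactAt i) (i : ℤ) :
    {p : (K.X i ⟶ K.X (i-1)) × (K.X (i+1) ⟶ K.X i) //
      K.d i (i+1) ≫ p.2 + p.1 ≫ K.d (i-1) i = 𝟙 (K.X i)} :=
  if hi : T ≤ i then ⟨(0, 0), (hT i hi).eq_of_src _ _⟩
  else
    letI := hproj i
    let prev := ffAux K T hT hproj hex (i + 1)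
    let F : K.X (i+1) ⟶ K.X i := prev.1.1 ≫ (K.XIsoOfEq (by omega : i + 1 - 1 = i)).hom
    let g : K.X i ⟶ K.X i := 𝟙 (K.X i) - K.d i (i+1) ≫ F
    have hex' : (K.sc' (i-1) i (i+1)).Exact :=
      (K.exactAt_iff' (i-1) i (i+1) (CochainComplex.prev ℤ i) (CochainComplex.next ℤ i)).1 (hex i)
    have hg : g ≫ K.d i (i+1) = 0 := by
      have hrel := prev.2
      have h1 : prev.1.1 ≫ K.d (i+1-1) (i+1) = 𝟙 _ - K.d (i+1) (i+1+1) ≫ prev.1.2 := by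
        rw [eq_sub_iff_add_eq]; exact (add_comm _ _).trans hrel
      dsimp only [g, F]
      rw [Preadditive.sub_comp, Category.id_comp, Category.assoc, Category.assoc,
        HomologicalComplex.XIsoOfEq_hom_comp_d, h1]
      simp
    let f₀ : K.X i ⟶ K.X (i-1) := hex'.liftFromProjective g hg
    ⟨(f₀, F), by
      have h2 : f₀ ≫ K.d (i-1) i = g := hex'.liftFromProjective_comp g hg
      rw [h2]
      dsimp only [g]
      abel⟩
termination_by (T - i).toNat
decreasing_by simp_wf; omega

lemma ffAux_snd (K : CochainComplex C ℤ) (T : ℤ)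
    (hT : ∀ i, T ≤ i → IsZero (K.X i))
    (hproj : ∀ i, Projective (K.X i)) (hex : ∀ i, K.ExactAt i) (i : ℤ) :
    (ffAux K T hT hproj hex i).1.2 =
      (ffAux K T hT hproj hex (i+1)).1.1 ≫ (K.XIsoOfEq (by omega : i + 1 - 1 = i)).hom := by
  by_cases hi : T ≤ i
  · rw [ffAux, dif_pos hi]
    rw [ffAux, dif_pos (by omega : T ≤ i + 1)]
    simp
  · conv_lhs => rw [ffAux, dif_neg hi]

lemma contraction (K : CochainComplex C ℤ) (T : ℤ)
    (hT : ∀ i, T ≤ i → IsZero (K.X i))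
    (hproj : ∀ i, Projective (K.X i)) (hex : ∀ i, K.ExactAt i) :
    Nonempty (Homotopy (𝟙 K) (0 : K ⟶ K)) := by
  let h : ∀ i j, (ComplexShape.up ℤ).Rel j i → (K.X i ⟶ K.X j) :=
    fun i j e => (ffAux K T hT hproj hex i).1.1 ≫
      (K.XIsoOfEq (show i - 1 = j by change j + 1 = i at e; omega)).hom
  have key : 𝟙 K = Homotopy.nullHomotopicMap' h := by
    ext i
    rw [Homotopy.nullHomotopicMap'_f (show (ComplexShape.up ℤ).Rel (i-1) i by change i - 1 + 1 = i; omega)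
      (show (ComplexShape.up ℤ).Rel i (i+1) by change i + 1 = i + 1; rfl)]
    dsimp only [h]
    rw [← ffAux_snd K T hT hproj hex i]
    have : (K.XIsoOfEq (show i - 1 = i - 1 by omega)).hom = 𝟙 _ := by
      simp
    rw [this, Category.comp_id]
    exact (ffAux K T hT hproj hex i).2.symm
  exact ⟨(Homotopy.ofEq key).trans (Homotopy.nullHomotopy' h)⟩

end Stmt5Aux

/-- let `R` be a commutative local ring and `Q•`, `P•` bounded cochain complexes
of finitely generated free `R`-modules.  If `φ : Q• → P•` is a quasi-isomorphism, then for any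
`f ∈ R` the chain map `f · id` on `Q•` is null-homotopic iff `f · id` on `P•` is
null-homotopic. -/
theorem stmt_5 {R : Type} [CommRing R] [IsLocalRing R]
    (Q P : CochainComplex (ModuleCat.{0} R) ℤ)
    (hQbd : ∃ s : Finset ℤ, ∀ i ∉ s, Limits.IsZero (Q.X i))
    (hPbd : ∃ s : Finset ℤ, ∀ i ∉ s, Limits.IsZero (P.X i))
    (hQfree : ∀ i, Module.Free R (Q.X i)) (hQfin : ∀ i, Module.Finite R (Q.X i))
    (hPfree : ∀ i, Module.Free R (P.X i)) (hPfin : ∀ i, Module.Finite R (P.X i))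
    (φ : Q ⟶ P) (hφ : QuasiIso φ) (f : R) :
    Nonempty (Homotopy (f • 𝟙 Q) (0 : Q ⟶ Q)) ↔ Nonempty (Homotopy (f • 𝟙 P) (0 : P ⟶ P)) := by
  obtain ⟨sQ, hsQ⟩ := hQbd
  obtain ⟨sP, hsP⟩ := hPbd
  -- projectivity of the terms
  have hQproj : ∀ i, Projective (Q.X i) := fun i => by
    have := hQfree i
    have h2 : Module.Projective R (Q.X i) := inferInstance
    exact Projective.of_iso (Iso.refl _) ((IsProjective.iff_projective _).mp h2)
  have hPproj : ∀ i, Projective (P.X i) := fun i => by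
    have := hPfree i
    have h2 : Module.Projective R (P.X i) := inferInstance
    exact Projective.of_iso (Iso.refl _) ((IsProjective.iff_projective _).mp h2)
  let F := HomotopyCategory.quotient (ModuleCat.{0} R) (ComplexShape.up ℤ)
  let cone := CochainComplex.mappingCone φ
  have coneIso : ∀ i : ℤ, cone.X i ≅ (Q.X (i+1)) ⊞ (P.X i) := fun i =>
    HomologicalComplex.homotopyCofiber.XIsoBiprod φ i (i+1) rfl
  have hconeproj : ∀ i, Projective (cone.X i) := fun i => by
    have := hQproj (i+1); have := hPproj i
    exact Projective.of_iso (coneIso i).symm inferInstance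
  -- a bound
  obtain ⟨bQ, hbQ⟩ := (sQ.finite_toSet).bddAbove
  obtain ⟨bP, hbP⟩ := (sP.finite_toSet).bddAbove
  have hQzero : ∀ i : ℤ, bQ < i → Limits.IsZero (Q.X i) := fun i hi =>
    hsQ i (fun hmem => absurd (hbQ hmem) (by omega))
  have hPzero : ∀ i : ℤ, bP < i → Limits.IsZero (P.X i) := fun i hi =>
    hsP i (fun hmem => absurd (hbP hmem) (by omega))
  have hconezero : ∀ i : ℤ, (max bQ bP + 1) ≤ i → Limits.IsZero (cone.X i) := fun i hi => by
    refine (Limits.IsZero.of_iso · (coneIso i)) ?_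
    rw [Limits.biprod_isZero_iff]
    exact ⟨hQzero (i+1) (by omega), hPzero i (by omega)⟩
  -- the cone is acyclic
  have hW : (HomotopyCategory.subcategoryAcyclic (ModuleCat.{0} R)).trW (F.map φ) := by
    rw [← HomotopyCategory.quasiIso_eq_trW_subcategoryAcyclic,
      HomotopyCategory.quotient_map_mem_quasiIso_iff, HomologicalComplex.mem_quasiIso_iff]
    exact hφ
  have hdist : CochainComplex.mappingCone.triangleh φ ∈
      (Pretriangulated.distinguishedTriangles (C := HomotopyCategory (ModuleCat.{0} R) (ComplexShape.up ℤ))) := by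
    exact HomotopyCategory.mappingCone_triangleh_distinguished φ
  have hP3 : (HomotopyCategory.subcategoryAcyclic (ModuleCat.{0} R))
      ((CochainComplex.mappingCone.triangleh φ).obj₃) :=
    ((HomotopyCategory.subcategoryAcyclic (ModuleCat.{0} R)).trW_iff_of_distinguished
      _ hdist).1 hW
  have hexact : ∀ n, cone.ExactAt n :=
    (HomotopyCategory.quotient_obj_mem_subcategoryAcyclic_iff_exactAt cone).1 hP3
  -- the cone is contractible
  obtain ⟨ht⟩ := Stmt5Aux.contraction cone (max bQ bP + 1) hconezero hconeproj hexact
  have hz : Limits.IsZero (F.obj cone) := by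
    rw [Limits.IsZero.iff_id_eq_zero]
    have h := HomotopyCategory.eq_of_homotopy _ _ ht
    rwa [CategoryTheory.Functor.map_id, CategoryTheory.Functor.map_zero] at h
  have hiso : IsIso (F.map φ) :=
    (Pretriangulated.Triangle.isZero₃_iff_isIso₁ _ hdist).1 hz
  -- conclude
  have comm : F.map (f • 𝟙 Q) ≫ F.map φ = F.map φ ≫ F.map (f • 𝟙 P) := by
    rw [← Functor.map_comp, ← Functor.map_comp, Linear.smul_comp, Linear.comp_smul,
      Category.id_comp, Category.comp_id]
  constructor
  · rintro ⟨h⟩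
    have h0 : F.map (f • 𝟙 Q) = 0 := by
      have := HomotopyCategory.eq_of_homotopy _ _ h
      rwa [Functor.map_zero] at this
    refine ⟨HomotopyCategory.homotopyOfEq _ _ ?_⟩
    have hc := comm
    rw [h0, zero_comp] at hc
    have : F.map φ ≫ F.map (f • 𝟙 P) = 0 := hc.symm
    rw [Preadditive.IsIso.comp_left_eq_zero] at this
    rw [this, Functor.map_zero]
  · rintro ⟨h⟩
    have h0 : F.map (f • 𝟙 P) = 0 := by
      have := HomotopyCategory.eq_of_homotopy _ _ h
      rwa [Functor.map_zero] at this
    refine ⟨HomotopyCategory.homotopyOfEq _ _ ?_⟩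
    have hc := comm
    rw [h0, comp_zero] at hc
    rw [Preadditive.IsIso.comp_right_eq_zero] at hc
    rw [hc, Functor.map_zero]
end

section
/- Let V be a finite-dimensional complex vector space of dimension 2n equipped with a nondegenerate symmetric bilinear form B, and let L₁, L₂ ⊆ V be maximal isotropic subspaces (i.e., B vanishes identically on each Lᵢ and dim Lᵢ = n). If n − dim(L₁ ∩ L₂) is even, then there exists a maximal isotropic subspace L' ⊆ V with L' ∩ L₁ = 0 and L' ∩ L₂ = 0. -/
set_option maxHeartbeats 1000000

open Module

private lemma exists_dual_family' {V : Type*} [AddCommGroup V] [Module ℂ V]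
    [FiniteDimensional ℂ V]
    (B : V →ₗ[ℂ] V →ₗ[ℂ] ℂ)
    (hnd : ∀ v, (∀ w, B v w = 0) → v = 0)
    (hsymm : ∀ x y, B x y = B y x)
    {k : ℕ} (κ : Fin k → V) (hκ : LinearIndependent ℂ κ) :
    ∃ h : Fin k → V, ∀ i j, B (κ i) (h j) = if i = j then 1 else 0 := by
  classical
  have hndB : LinearMap.BilinForm.Nondegenerate B :=
    ⟨hnd, fun v hv => hnd v fun w => by rw [hsymm]; exact hv w⟩
  have hrefl : B.IsRefl := fun x y hxy => by rw [hsymm]; exact hxy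
  set W := Submodule.span ℂ (Set.range κ) with hW
  have hWrank : Module.finrank ℂ W = k := by
    rw [finrank_span_eq_card hκ, Fintype.card_fin]
  set T : V →ₗ[ℂ] (Fin k → ℂ) := LinearMap.pi (fun i => B (κ i)) with hT
  have hker : LinearMap.ker T = LinearMap.BilinForm.orthogonal B W := by
    ext v
    simp only [LinearMap.mem_ker, hT, LinearMap.BilinForm.mem_orthogonal_iff,
      LinearMap.BilinForm.isOrtho_def, funext_iff, LinearMap.pi_apply, Pi.zero_apply]
    constructor
    · intro hv u hu
      obtain ⟨c, hc⟩ := (Submodule.mem_span_range_iff_exists_fun ℂ).mp hu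
      rw [← hc]
      simp [map_sum, map_smul, LinearMap.sum_apply, LinearMap.smul_apply, smul_eq_mul, hv]
    · intro hv i
      exact hv (κ i) (Submodule.subset_span ⟨i, rfl⟩)
  have horth : finrank ℂ (LinearMap.BilinForm.orthogonal B W) = finrank ℂ V - k := by
    rw [LinearMap.BilinForm.finrank_orthogonal hndB, hWrank]
  have hrn := LinearMap.finrank_range_add_finrank_ker T
  have hkle : k ≤ finrank ℂ V := by
    simpa using hκ.fintype_card_le_finrank
  have hrange : finrank ℂ (LinearMap.range T) = k := by
    rw [hker] at hrn
    omega
  have hsurj : Function.Surjective T := by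
    rw [← LinearMap.range_eq_top]
    apply Submodule.eq_top_of_finrank_eq
    rw [hrange, Module.finrank_fin_fun]
  refine ⟨fun j => (hsurj (Pi.single j 1)).choose, fun i j => ?_⟩
  have hspec := (hsurj (Pi.single j 1)).choose_spec
  have := congrFun hspec i
  simp only [hT, LinearMap.pi_apply] at this
  rw [this, Pi.single_apply]



/-- let `V` be a `2n`-dimensional complex vector space with a nondegenerate
symmetric bilinear form `B`, and let `L₁, L₂` be maximal isotropic subspaces (isotropic of
dimension `n`).  If `n − dim(L₁ ∩ L₂)` is even, then there exists a maximal isotropic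
subspace `L'` with `L' ∩ L₁ = 0` and `L' ∩ L₂ = 0`. -/
theorem stmt_8 {V : Type*} [AddCommGroup V] [Module ℂ V] [FiniteDimensional ℂ V] (n : ℕ)
    (hdim : Module.finrank ℂ V = 2 * n)
    (B : V →ₗ[ℂ] V →ₗ[ℂ] ℂ)
    (hsymm : ∀ x y, B x y = B y x)
    (hnd : ∀ v, (∀ w, B v w = 0) → v = 0)
    (L₁ L₂ : Submodule ℂ V)
    (h₁iso : ∀ x ∈ L₁, ∀ y ∈ L₁, B x y = 0) (h₁dim : Module.finrank ℂ L₁ = n)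
    (h₂iso : ∀ x ∈ L₂, ∀ y ∈ L₂, B x y = 0) (h₂dim : Module.finrank ℂ L₂ = n)
    (heven : Even (n - Module.finrank ℂ ↥(L₁ ⊓ L₂))) :
    ∃ L' : Submodule ℂ V,
      (∀ x ∈ L', ∀ y ∈ L', B x y = 0) ∧ Module.finrank ℂ L' = n ∧
      L' ⊓ L₁ = ⊥ ∧ L' ⊓ L₂ = ⊥ := by
  classical
  have hndB : LinearMap.BilinForm.Nondegenerate B :=
    ⟨hnd, fun v hv => hnd v fun w => by rw [hsymm]; exact hv w⟩
  have hrefl : B.IsRefl := fun x y hxy => by rw [hsymm]; exact hxy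
  set K : Submodule ℂ V := L₁ ⊓ L₂ with hK
  set k : ℕ := finrank ℂ ↥K with hk
  have hkn : k ≤ n := h₁dim ▸ Submodule.finrank_mono inf_le_left
  obtain ⟨p, hp⟩ := heven
  -- hp : n - k = p + p
  -- basis of K, mapped into V
  set bK := Module.finBasis ℂ ↥K with hbK
  set κ : Fin k → V := fun i => (bK i : V) with hκdef
  have hκmem : ∀ i, κ i ∈ K := fun i => (bK i).2
  have hκ1 : ∀ i, κ i ∈ L₁ := fun i => (hκmem i).1
  have hκ2 : ∀ i, κ i ∈ L₂ := fun i => (hκmem i).2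
  have hκind : LinearIndependent ℂ κ :=
    bK.linearIndependent.map' K.subtype (Submodule.ker_subtype K)
  -- complements of K inside L₁ and L₂
  obtain ⟨M₁, hM₁⟩ := Submodule.exists_isCompl (K.comap L₁.subtype)
  obtain ⟨M₂, hM₂⟩ := Submodule.exists_isCompl (K.comap L₂.subtype)
  have hKle₁ : K ≤ L₁ := inf_le_left
  have hKle₂ : K ≤ L₂ := inf_le_right
  have hcomapK₁ : finrank ℂ ↥(K.comap L₁.subtype) = k :=
    (Submodule.comapSubtypeEquivOfLe hKle₁).finrank_eq
  have hcomapK₂ : finrank ℂ ↥(K.comap L₂.subtype) = k :=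
    (Submodule.comapSubtypeEquivOfLe hKle₂).finrank_eq
  have hM₁rank : finrank ℂ ↥M₁ = n - k := by
    have := Submodule.finrank_add_eq_of_isCompl hM₁
    rw [hcomapK₁, h₁dim] at this
    omega
  have hM₂rank : finrank ℂ ↥M₂ = n - k := by
    have := Submodule.finrank_add_eq_of_isCompl hM₂
    rw [hcomapK₂, h₂dim] at this
    omega
  set bM₁ := Module.finBasis ℂ ↥M₁ with hbM₁
  set bM₂ := Module.finBasis ℂ ↥M₂ with hbM₂
  set e : Fin (n - k) → V :=
    fun i => ((bM₁ (finCongr hM₁rank.symm i) : ↥L₁) : V) with hedef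
  set f' : Fin (n - k) → V :=
    fun i => ((bM₂ (finCongr hM₂rank.symm i) : ↥L₂) : V) with hf'def
  have hemem : ∀ i, e i ∈ L₁ := fun i => ((bM₁ (finCongr hM₁rank.symm i) : ↥L₁)).2
  have hf'mem : ∀ i, f' i ∈ L₂ := fun i => ((bM₂ (finCongr hM₂rank.symm i) : ↥L₂)).2
  have hf'memM : ∀ i, f' i ∈ M₂.map L₂.subtype := fun i =>
    ⟨_, (bM₂ (finCongr hM₂rank.symm i)).2, rfl⟩
  have hf'ind : LinearIndependent ℂ f' := by
    have h0 : LinearIndependent ℂ (fun i : Fin (n - k) => bM₂ (finCongr hM₂rank.symm i)) :=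
      bM₂.linearIndependent.comp _ (finCongr hM₂rank.symm).injective
    have h1 := h0.map' M₂.subtype (Submodule.ker_subtype M₂)
    exact h1.map' L₂.subtype (Submodule.ker_subtype L₂)
  have hespan : Submodule.span ℂ (Set.range e) = M₁.map L₁.subtype := by
    have hre : Set.range e =
        (L₁.subtype ∘ M₁.subtype) '' (Set.range bM₁) := by
      ext v
      constructor
      · rintro ⟨i, rfl⟩; exact ⟨bM₁ (finCongr hM₁rank.symm i), ⟨_, rfl⟩, rfl⟩
      · rintro ⟨w, ⟨i, rfl⟩, rfl⟩
        exact ⟨finCongr hM₁rank i, by simp [hedef]⟩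
    rw [hre, Set.image_comp, Submodule.span_image, Submodule.span_image, bM₁.span_eq,
      Submodule.map_top, Submodule.range_subtype]
  -- the pairing matrix between e and f'
  set P : Matrix (Fin (n - k)) (Fin (n - k)) ℂ :=
    Matrix.of (fun i j => B (e i) (f' j)) with hP
  -- L₁ is its own orthogonal complement
  have horthL₁ : LinearMap.BilinForm.orthogonal B L₁ = L₁ := by
    have hle : L₁ ≤ LinearMap.BilinForm.orthogonal B L₁ := by
      intro x hx
      rw [LinearMap.BilinForm.mem_orthogonal_iff]
      intro y hy
      exact h₁iso y hy x hx
    have hfr : finrank ℂ (LinearMap.BilinForm.orthogonal B L₁) ≤ finrank ℂ L₁ := by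
      rw [LinearMap.BilinForm.finrank_orthogonal hndB, hdim, h₁dim]
      omega
    exact (Submodule.eq_of_le_of_finrank_le hle hfr).symm
  have hPdet : P.det ≠ 0 := by
    intro hdet
    obtain ⟨c, hc0, hmul⟩ := Matrix.exists_mulVec_eq_zero_iff.mpr hdet
    set y : V := ∑ j, c j • f' j with hy
    have hyL₂ : y ∈ L₂ := Submodule.sum_mem _ fun j _ => Submodule.smul_mem _ _ (hf'mem j)
    have hyM₂ : y ∈ M₂.map L₂.subtype :=
      Submodule.sum_mem _ fun j _ => Submodule.smul_mem _ _ (hf'memM j)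
    have hBei : ∀ i, B (e i) y = 0 := by
      intro i
      have := congrFun hmul i
      simp only [Matrix.mulVec, dotProduct, hP, Matrix.of_apply, Pi.zero_apply] at this
      rw [hy]
      simpa [map_sum, map_smul, smul_eq_mul, mul_comm] using this
    have hyorth : ∀ x ∈ L₁, B x y = 0 := by
      intro x hx
      have hxmem : (⟨x, hx⟩ : ↥L₁) ∈ (K.comap L₁.subtype) ⊔ M₁ := by
        rw [hM₁.sup_eq_top]; trivial
      obtain ⟨u, hu, w, hw, huw⟩ := Submodule.mem_sup.mp hxmem
      have hxuw : x = (u : V) + (w : V) := by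
        have := congrArg (Subtype.val) huw
        simpa using this.symm
      have hBu : B (u : V) y = 0 := h₂iso _ (hKle₂ hu) _ hyL₂
      have hBw : B (w : V) y = 0 := by
        have hwmem : (w : V) ∈ Submodule.span ℂ (Set.range e) := by
          rw [hespan]; exact ⟨w, hw, rfl⟩
        obtain ⟨a, ha⟩ := (Submodule.mem_span_range_iff_exists_fun ℂ).mp hwmem
        rw [← ha]
        simp [map_sum, map_smul, LinearMap.sum_apply, LinearMap.smul_apply, smul_eq_mul, hBei]
      rw [hxuw, map_add, LinearMap.add_apply, hBu, hBw, add_zero]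
    have hyL₁ : y ∈ L₁ := by
      rw [← horthL₁, LinearMap.BilinForm.mem_orthogonal_iff]
      intro u hu
      exact hyorth u hu
    have hyK : y ∈ (K.comap L₂.subtype).map L₂.subtype := by
      rw [Submodule.map_comap_subtype]
      exact ⟨hyL₂, hyL₁, hyL₂⟩
    have hybot : y ∈ (⊥ : Submodule ℂ V) := by
      have hdisj := hM₂.disjoint
      have : ((K.comap L₂.subtype).map L₂.subtype) ⊓ (M₂.map L₂.subtype) = ⊥ := by
        rw [← Submodule.map_inf _ (Submodule.injective_subtype L₂), disjoint_iff.mp hdisj,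
          Submodule.map_bot]
      rw [← this]
      exact ⟨hyK, hyM₂⟩
    have hy0 : y = 0 := by simpa using hybot
    have : ∀ j, c j = 0 := by
      have := Fintype.linearIndependent_iff.mp hf'ind c (by rw [← hy, hy0])
      exact this
    exact hc0 (funext this)
  -- invert the pairing to get a dual family f inside L₂
  have hPunit : IsUnit P.det := isUnit_iff_ne_zero.mpr hPdet
  set Q : Matrix (Fin (n - k)) (Fin (n - k)) ℂ := P⁻¹ with hQ
  have hPQ : P * Q = 1 := Matrix.mul_nonsing_inv P hPunit
  set f : Fin (n - k) → V := fun j => ∑ s, Q s j • f' s with hfdef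
  have hfmem : ∀ j, f j ∈ L₂ := fun j =>
    Submodule.sum_mem _ fun s _ => Submodule.smul_mem _ _ (hf'mem s)
  have hef : ∀ i j, B (e i) (f j) = if i = j then 1 else 0 := by
    intro i j
    have := congrFun (congrFun hPQ i) j
    rw [hfdef]
    simp only [map_sum, map_smul, smul_eq_mul]
    rw [Matrix.mul_apply] at this
    rw [← Matrix.one_apply (i := i) (j := j), ← this]
    apply Finset.sum_congr rfl
    intro s _
    simp only [hP, Matrix.of_apply]
    ring
  -- reindex e and f by Fin p ⊕ Fin p
  have hppm : p + p = n - k := hp.symm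
  set eqv : (Fin p ⊕ Fin p) ≃ Fin (n - k) := finSumFinEquiv.trans (finCongr hppm) with heqv
  set E : (Fin p ⊕ Fin p) → V := fun x => e (eqv x) with hE
  set F : (Fin p ⊕ Fin p) → V := fun x => f (eqv x) with hF
  have hEmem : ∀ x, E x ∈ L₁ := fun x => hemem _
  have hFmem : ∀ x, F x ∈ L₂ := fun x => hfmem _
  have hEF : ∀ x y, B (E x) (F y) = if x = y then 1 else 0 := by
    intro x y
    rw [hE, hF, hef]
    simp [eqv.injective.eq_iff]
  have hEE : ∀ x y, B (E x) (E y) = 0 := fun x y => h₁iso _ (hEmem x) _ (hEmem y)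
  have hFF : ∀ x y, B (F x) (F y) = 0 := fun x y => h₂iso _ (hFmem x) _ (hFmem y)
  have hFE : ∀ x y, B (F x) (E y) = if y = x then 1 else 0 := by
    intro x y; rw [hsymm, hEF]
  have hκE : ∀ i x, B (κ i) (E x) = 0 := fun i x => h₁iso _ (hκ1 i) _ (hEmem x)
  have hκF : ∀ i x, B (κ i) (F x) = 0 := fun i x => h₂iso _ (hκ2 i) _ (hFmem x)
  have hEκ : ∀ x i, B (E x) (κ i) = 0 := fun x i => by rw [hsymm, hκE]
  have hFκ : ∀ x i, B (F x) (κ i) = 0 := fun x i => by rw [hsymm, hκF]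
  have hκκ : ∀ i j, B (κ i) (κ j) = 0 := fun i j => h₁iso _ (hκ1 i) _ (hκ1 j)
  -- a dual family to κ
  obtain ⟨h0, hκh0⟩ := exists_dual_family' B hnd hsymm κ hκind
  -- forget all construction details that are no longer needed
  clear_value bK bM₁ bM₂ e f' P Q f E F κ eqv
  clear hκdef hedef hf'def hP hQ hPQ hfdef hE hF heqv hef hbK hbM₁ hbM₂ hespan
    hf'ind hf'memM hf'mem hemem hfmem hPdet hPunit horthL₁ hκmem
    hM₁ hM₂ hM₁rank hM₂rank hcomapK₁ hcomapK₂ hppm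
  clear bK bM₁ bM₂ e f' P Q f eqv M₁ M₂
  -- correct h0 to be orthogonal to E and F
  set h1 : Fin k → V := fun j =>
    h0 j - ∑ x, (B (F x) (h0 j)) • E x - ∑ x, (B (E x) (h0 j)) • F x with hh1
  have hκh1 : ∀ i j, B (κ i) (h1 j) = if i = j then 1 else 0 := by
    intro i j
    rw [hh1]
    simp [map_sub, map_sum, map_smul, smul_eq_mul, hκE, hκF, hκh0]
  have hEh1 : ∀ x j, B (E x) (h1 j) = 0 := by
    intro x j
    rw [hh1]
    rcases x with s | s <;>
      simp [map_sub, map_sum, map_smul, smul_eq_mul, hEE, hEF, mul_ite,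
        Fintype.sum_sum_type, Finset.sum_ite_eq]
  have hFh1 : ∀ x j, B (F x) (h1 j) = 0 := by
    intro x j
    rw [hh1]
    rcases x with s | s <;>
      simp [map_sub, map_sum, map_smul, smul_eq_mul, hFF, hFE, mul_ite,
        Fintype.sum_sum_type, Finset.sum_ite_eq']
  have hh1κ : ∀ j s, B (h1 j) (κ s) = if s = j then 1 else 0 := by
    intro j s; rw [hsymm, hκh1]
  clear_value h1
  clear hh1 hκh0
  -- correct h1 to be isotropic
  set h2 : Fin k → V := fun j =>
    h1 j - (2⁻¹ : ℂ) • ∑ s, (B (h1 j) (h1 s)) • κ s with hh2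
  have hexp : ∀ (i : Fin k) (z : V),
      B (h2 i) z = B (h1 i) z - (2⁻¹ : ℂ) * ∑ s, (B (h1 i) (h1 s)) * B (κ s) z := by
    intro i z
    rw [hh2]
    simp [map_sub, map_smul, map_sum, LinearMap.sub_apply, LinearMap.smul_apply,
      LinearMap.sum_apply, smul_eq_mul, Finset.mul_sum]
  have hsymm2 : ∀ (z : V) (j : Fin k), B z (h2 j) = B (h2 j) z := fun z j => (hsymm _ _).symm
  have hκh2 : ∀ i j, B (κ i) (h2 j) = if i = j then 1 else 0 := by
    intro i j
    rw [hsymm, hexp]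
    have h1' : ∀ s, B (h1 j) (h1 s) * B (κ s) (κ i) = 0 := by
      intro s; rw [hκκ, mul_zero]
    rw [Finset.sum_congr rfl fun s _ => h1' s]
    rw [hsymm (h1 j) (κ i), hκh1]
    simp [eq_comm]
  have hEh2 : ∀ x j, B (E x) (h2 j) = 0 := by
    intro x j
    rw [hsymm2, hexp]
    have h1' : ∀ s, B (h1 j) (h1 s) * B (κ s) (E x) = 0 := by
      intro s; rw [hκE, mul_zero]
    rw [Finset.sum_congr rfl fun s _ => h1' s, hsymm (h1 j) (E x), hEh1]
    simp
  have hFh2 : ∀ x j, B (F x) (h2 j) = 0 := by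
    intro x j
    rw [hsymm2, hexp]
    have h1' : ∀ s, B (h1 j) (h1 s) * B (κ s) (F x) = 0 := by
      intro s; rw [hκF, mul_zero]
    rw [Finset.sum_congr rfl fun s _ => h1' s, hsymm (h1 j) (F x), hFh1]
    simp
  have hh2h2 : ∀ i j, B (h2 i) (h2 j) = 0 := by
    intro i j
    rw [hexp]
    have hcollapse : ∀ s, B (h1 i) (h1 s) * B (κ s) (h2 j)
        = if s = j then B (h1 i) (h1 s) else 0 := by
      intro s
      rw [hκh2]
      by_cases hsj : s = j <;> simp [hsj]
    rw [Finset.sum_congr rfl fun s _ => hcollapse s, Finset.sum_ite_eq' Finset.univ j]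
    have hj2 : B (h1 i) (h2 j) = B (h1 i) (h1 j) - (2⁻¹ : ℂ) * B (h1 i) (h1 j) := by
      rw [hsymm (h1 i) (h2 j), hexp]
      have hcoll2 : ∀ s, B (h1 j) (h1 s) * B (κ s) (h1 i)
          = if s = i then B (h1 j) (h1 s) else 0 := by
        intro s
        rw [hsymm (κ s) (h1 i), hh1κ]
        by_cases hsi : s = i <;> simp [hsi]
      rw [Finset.sum_congr rfl fun s _ => hcoll2 s, Finset.sum_ite_eq' Finset.univ i]
      rw [hsymm (h1 j) (h1 i)]
      simp
    rw [hj2]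
    simp
    ring
  clear_value h2
  clear hh2 hexp hsymm2 hκh1 hEh1 hFh1 hh1κ h1
  -- the twisted family g
  set g : (Fin p ⊕ Fin p) → V := fun t =>
    Sum.elim (fun s => E (Sum.inl s) + F (Sum.inr s))
      (fun s => E (Sum.inr s) - F (Sum.inl s)) t with hg
  have hgmem : ∀ t, g t ∈ L₁ ⊔ L₂ := by
    intro t
    rcases t with s | s <;> rw [hg]
    · exact Submodule.add_mem _ (Submodule.mem_sup_left (hEmem _))
        (Submodule.mem_sup_right (hFmem _))
    · exact Submodule.sub_mem _ (Submodule.mem_sup_left (hEmem _))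
        (Submodule.mem_sup_right (hFmem _))
  have hκg : ∀ i t, B (κ i) (g t) = 0 := by
    intro i t
    rcases t with s | s <;> rw [hg] <;>
      simp [map_add, map_sub, hκE, hκF]
  have hFg : ∀ x t, B (F x) (g t) = if t = x then 1 else 0 := by
    intro x t
    rcases t with s | s <;> rw [hg]
    · simp only [Sum.elim_inl, map_add, hFE, hFF, add_zero]
    · simp only [Sum.elim_inr, map_sub, hFE, hFF, sub_zero]
  have hEgl : ∀ x s, B (E x) (g (Sum.inl s)) = if x = Sum.inr s then 1 else 0 := by
    intro x s
    rw [hg]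
    simp [map_add, hEE, hEF]
  have hEgr : ∀ x s, B (E x) (g (Sum.inr s)) = -(if x = Sum.inl s then 1 else 0) := by
    intro x s
    rw [hg]
    simp [map_sub, hEE, hEF]
  have hgh2 : ∀ t j, B (g t) (h2 j) = 0 := by
    intro t j
    rcases t with s | s <;> rw [hg] <;>
      simp [map_add, map_sub, LinearMap.add_apply, LinearMap.sub_apply, hEh2, hFh2]
  have hh2g : ∀ j t, B (h2 j) (g t) = 0 := fun j t => by rw [hsymm, hgh2]
  have hgg : ∀ t u, B (g t) (g u) = 0 := by
    intro t u
    rcases t with s | s <;> rcases u with r | r <;> rcases eq_or_ne s r with h | h <;> rw [hg] <;>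
      first
        | (subst h
           simp [map_add, map_sub, LinearMap.add_apply, LinearMap.sub_apply,
             hEE, hEF, hFE, hFF])
        | (simp [map_add, map_sub, LinearMap.add_apply, LinearMap.sub_apply,
             hEE, hEF, hFE, hFF, h, h.symm])
  clear_value g
  clear hg
  -- the combined family G and the subspace L'
  set G : (Fin k ⊕ (Fin p ⊕ Fin p)) → V := Sum.elim h2 g with hG
  set L' : Submodule ℂ V := Submodule.span ℂ (Set.range G) with hL'
  have hGG : ∀ a b, B (G a) (G b) = 0 := by
    intro a b
    rcases a with i | t <;> rcases b with j | u <;>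
      simp [hG, hh2h2, hh2g, hgh2, hgg]
  -- coefficient extraction
  have hcκ : ∀ (c : (Fin k ⊕ (Fin p ⊕ Fin p)) → ℂ) (i : Fin k),
      B (κ i) (∑ a, c a • G a) = c (Sum.inl i) := by
    intro c i
    simp [map_sum, map_smul, smul_eq_mul, Fintype.sum_sum_type, hG, hκh2, hκg,
      mul_ite, Finset.sum_ite_eq]
  have hcF : ∀ (c : (Fin k ⊕ (Fin p ⊕ Fin p)) → ℂ) (y : Fin p ⊕ Fin p),
      B (F y) (∑ a, c a • G a) = c (Sum.inr y) := by
    intro c y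
    rcases y with s | s <;>
      simp [map_sum, map_smul, smul_eq_mul, Fintype.sum_sum_type, hG, hFh2, hFg,
        mul_ite, Finset.sum_ite_eq']
  have hcEl : ∀ (c : (Fin k ⊕ (Fin p ⊕ Fin p)) → ℂ) (s : Fin p),
      B (E (Sum.inr s)) (∑ a, c a • G a) = c (Sum.inr (Sum.inl s)) := by
    intro c s
    simp [map_sum, map_smul, smul_eq_mul, Fintype.sum_sum_type, hG, hEh2, hEgl, hEgr,
      mul_ite, Finset.sum_ite_eq]
  have hcEr : ∀ (c : (Fin k ⊕ (Fin p ⊕ Fin p)) → ℂ) (s : Fin p),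
      B (E (Sum.inl s)) (∑ a, c a • G a) = -c (Sum.inr (Sum.inr s)) := by
    intro c s
    simp [map_sum, map_smul, smul_eq_mul, Fintype.sum_sum_type, hG, hEh2, hEgl, hEgr,
      mul_ite, Finset.sum_ite_eq]
  -- linear independence and dimension
  have hGind : LinearIndependent ℂ G := by
    rw [Fintype.linearIndependent_iff]
    intro c hc a
    rcases a with i | t
    · have := hcκ c i
      rw [hc] at this
      simpa using this.symm
    · rcases t with s | s
      · have := hcEl c s
        rw [hc] at this
        simpa using this.symm
      · have := hcEr c s
        rw [hc] at this
        have h0' : -c (Sum.inr (Sum.inr s)) = 0 := by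
          rw [← this]; simp
        simpa [neg_eq_zero] using h0'
  have hdimL' : finrank ℂ L' = n := by
    rw [hL', finrank_span_eq_card hGind]
    simp only [Fintype.card_sum, Fintype.card_fin]
    omega
  -- isotropy of L'
  have hisoL' : ∀ x ∈ L', ∀ y ∈ L', B x y = 0 := by
    intro x hx y hy
    rw [hL'] at hx hy
    obtain ⟨c, rfl⟩ := (Submodule.mem_span_range_iff_exists_fun ℂ).mp hx
    obtain ⟨d, rfl⟩ := (Submodule.mem_span_range_iff_exists_fun ℂ).mp hy
    simp [map_sum, map_smul, LinearMap.sum_apply, LinearMap.smul_apply, smul_eq_mul, hGG]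
  -- triviality of intersections
  have hint₁ : L' ⊓ L₁ = ⊥ := by
    rw [eq_bot_iff]
    rintro x ⟨hx', hx1⟩
    obtain ⟨c, hc⟩ := (Submodule.mem_span_range_iff_exists_fun ℂ).mp (hL' ▸ hx' : x ∈ Submodule.span ℂ (Set.range G))
    have hcz : ∀ a, c a = 0 := by
      intro a
      rcases a with i | t
      · have := hcκ c i
        rw [hc] at this
        rw [← this, h₁iso _ (hκ1 i) _ hx1]
      · rcases t with s | s
        · have := hcEl c s
          rw [hc] at this
          rw [← this, h₁iso _ (hEmem _) _ hx1]
        · have := hcEr c s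
          rw [hc] at this
          have : -c (Sum.inr (Sum.inr s)) = 0 := by
            rw [← this, h₁iso _ (hEmem _) _ hx1]
          simpa using this
    have : x = 0 := by
      rw [← hc]
      exact Finset.sum_eq_zero fun a _ => by rw [hcz a, zero_smul]
    simp [this]
  have hint₂ : L' ⊓ L₂ = ⊥ := by
    rw [eq_bot_iff]
    rintro x ⟨hx', hx2⟩
    obtain ⟨c, hc⟩ := (Submodule.mem_span_range_iff_exists_fun ℂ).mp (hL' ▸ hx' : x ∈ Submodule.span ℂ (Set.range G))
    have hcz : ∀ a, c a = 0 := by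
      intro a
      rcases a with i | t
      · have := hcκ c i
        rw [hc] at this
        rw [← this, h₂iso _ (hκ2 i) _ hx2]
      · have := hcF c t
        rw [hc] at this
        rw [← this, h₂iso _ (hFmem t) _ hx2]
    have : x = 0 := by
      rw [← hc]
      exact Finset.sum_eq_zero fun a _ => by rw [hcz a, zero_smul]
    simp [this]
  exact ⟨L', hisoL', hdimL', hint₁, hint₂⟩
end

section
/- Let V be a finite-dimensional vector space over a field K with a nondegenerate alternating bilinear form ω, let L₁, L₂ ⊆ V be Lagrangian subspaces, and let M ⊆ L₁ be a subspace such that V = L₂ + M^⊥, where M^⊥ = {v ∈ V : ω(v, m) = 0 for all m ∈ M}. Then: (1) L₂ ∩ M = 0; (2) M ⊆ L₁ ⊆ M^⊥, and ω descends to a well-defined nondegenerate alternating bilinear form ω̄ on the quotient M^⊥/M (i.e., ω̄(x + M, y + M) = ω(x, y) for x, y ∈ M^⊥); (3) the images of L₁ and of L₂ ∩ M^⊥ in M^⊥/M are Lagrangian subspaces with respect to ω̄. (Symplectic reduction of a pair of Lagrangians by an isotropic subspace.) -/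
/-- The orthogonal complement `{v | ∀ l ∈ L, ω v l = 0}` of a subspace `L` with respect to a
bilinear form `ω`. -/
def symplecticOrth {K V : Type*} [Field K] [AddCommGroup V] [Module K V]
    (ω : V →ₗ[K] V →ₗ[K] K) (L : Submodule K V) : Submodule K V where
  carrier := {v | ∀ l ∈ L, ω v l = 0}
  add_mem' := by
    intro a b ha hb l hl
    simp [ha l hl, hb l hl]
  zero_mem' := by
    intro l hl
    simp
  smul_mem' := by
    intro c a ha l hl
    simp [ha l hl]

section Aux

variable {K V : Type*} [Field K] [AddCommGroup V] [Module K V]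
    (ω : V →ₗ[K] V →ₗ[K] K)

lemma mem_symplecticOrth {L : Submodule K V} {v : V} :
    v ∈ symplecticOrth ω L ↔ ∀ l ∈ L, ω v l = 0 := Iff.rfl

lemma isRefl_of_alt (halt : ∀ v, ω v v = 0) : LinearMap.IsRefl ω := by
  intro x y hxy
  have h := halt (x + y)
  simp only [map_add, LinearMap.add_apply, halt x, halt y] at h
  linear_combination h - hxy

lemma sorth_eq_orth (halt : ∀ v, ω v v = 0) (L : Submodule K V) :
    symplecticOrth ω L = LinearMap.BilinForm.orthogonal ω L := by
  ext v
  constructor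
  · intro hv l hl
    exact isRefl_of_alt ω halt v l (hv l hl)
  · intro hv l hl
    exact isRefl_of_alt ω halt l v (hv l hl)

lemma sorth_sorth [FiniteDimensional K V] (halt : ∀ v, ω v v = 0)
    (hnd : ∀ v, (∀ w, ω v w = 0) → v = 0) (W : Submodule K V) :
    symplecticOrth ω (symplecticOrth ω W) = W := by
  rw [sorth_eq_orth ω halt, sorth_eq_orth ω halt]
  exact LinearMap.BilinForm.orthogonal_orthogonal
    ((isRefl_of_alt ω halt).nondegenerate_iff_separatingLeft.2 hnd) (isRefl_of_alt ω halt) W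

lemma sorth_sup (A B : Submodule K V) :
    symplecticOrth ω (A ⊔ B) = symplecticOrth ω A ⊓ symplecticOrth ω B := by
  ext v
  constructor
  · intro hv
    exact ⟨fun l hl => hv l (Submodule.mem_sup_left hl),
      fun l hl => hv l (Submodule.mem_sup_right hl)⟩
  · rintro ⟨h1, h2⟩ l hl
    rcases Submodule.mem_sup.1 hl with ⟨a, ha, b, hb, rfl⟩
    simp [h1 a ha, h2 b hb]

end Aux

/-- symplectic reduction of a pair of Lagrangians by an isotropic subspace:
let `(V, ω)` be a finite-dimensional symplectic vector space over a field `K`, `L₁, L₂`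
Lagrangian subspaces (`L` Lagrangian means `L = L^⊥`), and `M ⊆ L₁` a subspace with
`V = L₂ + M^⊥`.  Then (1) `L₂ ∩ M = 0`; (2) `L₁ ⊆ M^⊥` (so `M ⊆ L₁ ⊆ M^⊥`), and `ω` descends
to a well-defined nondegenerate alternating bilinear form `ω̄` on `M^⊥/M`; (3) the images of
`L₁` and of `L₂ ∩ M^⊥` in `M^⊥/M` are Lagrangian with respect to `ω̄`. -/
theorem stmt_10 {K V : Type*} [Field K] [AddCommGroup V] [Module K V] [FiniteDimensional K V]
    (ω : V →ₗ[K] V →ₗ[K] K)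
    (halt : ∀ v, ω v v = 0)
    (hnd : ∀ v, (∀ w, ω v w = 0) → v = 0)
    (L₁ L₂ : Submodule K V)
    (hL₁ : L₁ = symplecticOrth ω L₁)
    (hL₂ : L₂ = symplecticOrth ω L₂)
    (M : Submodule K V) (hM : M ≤ L₁)
    (hsum : L₂ ⊔ symplecticOrth ω M = ⊤) :
    L₂ ⊓ M = ⊥ ∧
    L₁ ≤ symplecticOrth ω M ∧
    ∃ ωbar : (↥(symplecticOrth ω M) ⧸ M.comap (symplecticOrth ω M).subtype) →ₗ[K]
        (↥(symplecticOrth ω M) ⧸ M.comap (symplecticOrth ω M).subtype) →ₗ[K] K,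
      (∀ x y : ↥(symplecticOrth ω M),
        ωbar (Submodule.Quotient.mk x) (Submodule.Quotient.mk y) = ω (x : V) (y : V)) ∧
      (∀ q, ωbar q q = 0) ∧
      (∀ q, (∀ q', ωbar q q' = 0) → q = 0) ∧
      (Submodule.map (M.comap (symplecticOrth ω M).subtype).mkQ
          (L₁.comap (symplecticOrth ω M).subtype) =
        symplecticOrth ωbar (Submodule.map (M.comap (symplecticOrth ω M).subtype).mkQ
          (L₁.comap (symplecticOrth ω M).subtype))) ∧
      (Submodule.map (M.comap (symplecticOrth ω M).subtype).mkQ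
          ((L₂ ⊓ symplecticOrth ω M).comap (symplecticOrth ω M).subtype) =
        symplecticOrth ωbar (Submodule.map (M.comap (symplecticOrth ω M).subtype).mkQ
          ((L₂ ⊓ symplecticOrth ω M).comap (symplecticOrth ω M).subtype))) := by
  have hrefl := isRefl_of_alt ω halt
  set N := symplecticOrth ω M with hN
  have hL₁N : L₁ ≤ N := by
    intro x hx m hm
    rw [hL₁] at hx
    exact hx m (hM hm)
  have hMN : M ≤ N := le_trans hM hL₁N
  -- part 1
  have part1 : L₂ ⊓ M = ⊥ := by
    rw [eq_bot_iff]
    rintro x ⟨hxL₂, hxM⟩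
    refine (Submodule.mem_bot K).2 (hnd x fun w => ?_)
    have hw : w ∈ L₂ ⊔ N := hsum ▸ Submodule.mem_top
    rcases Submodule.mem_sup.1 hw with ⟨a, ha, b, hb, rfl⟩
    have h1 : ω x a = 0 := by rw [hL₂] at hxL₂; exact hxL₂ a ha
    have h2 : ω x b = 0 := hrefl b x (hb x hxM)
    simp [h1, h2]
  -- the quotient setup
  set M' := M.comap N.subtype with hM'
  have hmemM' : ∀ x : N, x ∈ M' ↔ (x : V) ∈ M := fun x => Iff.rfl
  set g : N →ₗ[K] N →ₗ[K] K := ω.compl₁₂ N.subtype N.subtype with hg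
  have hgapp : ∀ x y : N, g x y = ω (x : V) (y : V) := by
    intro x y; simp [hg]
  have h₁ : M' ≤ LinearMap.ker g := by
    intro m hm
    ext n
    have : ω (n : V) (m : V) = 0 := n.2 (m : V) hm
    simpa [hgapp] using hrefl _ _ this
  set A := M'.liftQ g h₁ with hA
  have h₂ : M' ≤ LinearMap.ker A.flip := by
    intro m hm
    ext n
    show A (Submodule.Quotient.mk n) m = 0
    rw [hA, Submodule.liftQ_apply, hgapp]
    exact n.2 (m : V) hm
  set ωbar := (M'.liftQ A.flip h₂).flip with hωbar
  have hωapp : ∀ x y : N,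
      ωbar (Submodule.Quotient.mk x) (Submodule.Quotient.mk y) = ω (x : V) (y : V) := by
    intro x y
    show (M'.liftQ A.flip h₂) (Submodule.Quotient.mk y) (Submodule.Quotient.mk x) = _
    rw [Submodule.liftQ_apply]
    show A (Submodule.Quotient.mk x) y = _
    rw [hA, Submodule.liftQ_apply, hgapp]
  refine ⟨part1, hL₁N, ωbar, hωapp, ?_, ?_, ?_, ?_⟩
  · -- alternating
    intro q
    obtain ⟨n, rfl⟩ := Submodule.Quotient.mk_surjective M' q
    rw [hωapp]; exact halt _
  · -- nondegenerate
    intro q hq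
    obtain ⟨n, rfl⟩ := Submodule.Quotient.mk_surjective M' q
    have hnM : (n : V) ∈ M := by
      rw [← sorth_sorth ω halt hnd M]
      intro l hl
      have := hq (Submodule.Quotient.mk ⟨l, hl⟩)
      rwa [hωapp] at this
    exact (Submodule.Quotient.mk_eq_zero _).2 hnM
  · -- L₁ image Lagrangian
    ext q
    obtain ⟨n, rfl⟩ := Submodule.Quotient.mk_surjective M' q
    constructor
    · rintro hq p hp
      obtain ⟨y, hy, rfl⟩ := hp
      obtain ⟨x, hx, hxq⟩ := hq
      rw [Submodule.mkQ_apply] at hxq ⊢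
      rw [← hxq, hωapp]
      have : (x : V) ∈ symplecticOrth ω L₁ := hL₁ ▸ hx
      exact this (y : V) hy
    · intro hq
      have hnL₁ : (n : V) ∈ L₁ := by
        rw [hL₁]
        intro l hl
        have hlN : l ∈ N := hL₁N hl
        have := hq (Submodule.Quotient.mk ⟨l, hlN⟩)
          ⟨⟨l, hlN⟩, hl, rfl⟩
        rwa [hωapp] at this
      exact ⟨n, hnL₁, rfl⟩
  · -- L₂ ∩ N image Lagrangian
    have hkey : symplecticOrth ω (L₂ ⊓ N) = L₂ ⊔ M := by
      have : L₂ ⊓ N = symplecticOrth ω (L₂ ⊔ M) := by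
        rw [sorth_sup, ← hL₂, hN]
      rw [this, sorth_sorth ω halt hnd]
    ext q
    obtain ⟨n, rfl⟩ := Submodule.Quotient.mk_surjective M' q
    constructor
    · rintro hq p hp
      obtain ⟨y, hy, rfl⟩ := hp
      obtain ⟨x, hx, hxq⟩ := hq
      rw [Submodule.mkQ_apply] at hxq ⊢
      rw [← hxq, hωapp]
      have : (x : V) ∈ symplecticOrth ω L₂ := hL₂ ▸ hx.1
      exact this (y : V) hy.1
    · intro hq
      have hnorth : (n : V) ∈ symplecticOrth ω (L₂ ⊓ N) := by
        intro l hl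
        have hlN : l ∈ N := hl.2
        have := hq (Submodule.Quotient.mk ⟨l, hlN⟩)
          ⟨⟨l, hlN⟩, ⟨hl.1, hlN⟩, rfl⟩
        rwa [hωapp] at this
      rw [hkey] at hnorth
      rcases Submodule.mem_sup.1 hnorth with ⟨a, ha, b, hb, hab⟩
      have haN : a ∈ N := by
        have : a = (n : V) - b := by rw [← hab, add_sub_cancel_right]
        rw [this]
        exact N.sub_mem n.2 (hMN hb)
      refine ⟨⟨a, haN⟩, ⟨ha, haN⟩, ?_⟩
      rw [Submodule.mkQ_apply, Submodule.Quotient.eq]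
      show ((⟨a, haN⟩ : N) : V) - (n : V) ∈ M
      have : a - (n : V) = -b := by rw [← hab]; abel
      simpa [this] using M.neg_mem hb
end

section
/- Let K be a field, m ≥ 1, and b₁, …, b_{2m} ∈ K pairwise distinct elements. Then the 2m × 2m matrix B with entries B_{pq} = Σ_{i=1}^{m} (b_p·b_q)^{2(i−1)}·(b_p − b_q) is invertible. (This is the key nondegeneracy computation, for odd genus g = 2m + 1, showing that the skew-symmetrized Massey product associated to the quadratic relation built from the polynomials Hᵢ = t^{2(i−1)} on a hyperelliptic curve is nondegenerate.) -/
open Matrix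

open scoped Kronecker

/-- let `K` be a field, `m ≥ 1`, and `b₁, …, b_{2m} ∈ K` pairwise distinct.
Then the `2m × 2m` (skew-symmetric) matrix `B` with entries
`B_{pq} = Σ_{i=1}^{m} (b_p b_q)^{2(i−1)} (b_p − b_q)` is invertible. -/
theorem stmt_14 {K : Type*} [Field K] (m : ℕ) (hm : 1 ≤ m)
    (b : Fin (2 * m) → K) (hb : Function.Injective b)
    (B : Matrix (Fin (2 * m)) (Fin (2 * m)) K)
    (hB : ∀ p q, B p q = ∑ i ∈ Finset.range m, (b p * b q) ^ (2 * i) * (b p - b q)) :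
    IsUnit B := by
  classical
  let e : Fin m × Fin 2 ≃ Fin (2 * m) := finProdFinEquiv.trans (finCongr (mul_comm m 2))
  have he : ∀ x : Fin m × Fin 2, ((e x : Fin (2 * m)) : ℕ) = 2 * (x.1 : ℕ) + (x.2 : ℕ) := by
    intro x
    simp [e, finProdFinEquiv]
    ring
  let V := Matrix.vandermonde b
  let W := V.submatrix e e
  let J : Matrix (Fin m × Fin 2) (Fin m × Fin 2) K :=
    (1 : Matrix (Fin m) (Fin m) K) ⊗ₖ !![0, -1; 1, 0]
  have key : B.submatrix e e = W * J * Wᵀ := by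
    ext x y
    rw [Matrix.mul_apply]
    simp only [Matrix.mul_apply, Matrix.transpose_apply, Matrix.submatrix_apply, W, V,
      Matrix.vandermonde_apply, J, Matrix.kroneckerMap_apply, Matrix.one_apply, hB]
    rw [Fintype.sum_prod_type]
    simp only [Fin.sum_univ_two, Fintype.sum_prod_type]
    simp only [Finset.sum_ite_eq', Finset.mem_univ, if_true, ite_mul, zero_mul, one_mul,
      mul_ite, mul_zero, mul_one, mul_neg, Matrix.cons_val', Matrix.cons_val_zero,
      Matrix.cons_val_one, Matrix.head_cons, Matrix.head_fin_const, Matrix.empty_val',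
      Matrix.cons_val_fin_one, he]
    norm_num [Matrix.cons_val_zero, Matrix.cons_val_one, Matrix.head_cons,
      Finset.sum_ite_eq', Finset.mem_univ]
    rw [← Fin.sum_univ_eq_sum_range]
    refine Finset.sum_congr rfl fun i _ => ?_
    ring
  have hVdet : V.det ≠ 0 := by
    rw [Matrix.det_vandermonde]
    refine Finset.prod_ne_zero_iff.2 fun i _ => Finset.prod_ne_zero_iff.2 fun j hj => ?_
    exact sub_ne_zero.2 fun h => (Finset.mem_Ioi.1 hj).ne' (hb h)
  have hJdet : J.det = 1 := by
    rw [Matrix.det_kronecker]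
    simp [Matrix.det_fin_two_of]
  have hBdet : B.det ≠ 0 := by
    rw [← Matrix.det_submatrix_equiv_self e, key]
    rw [Matrix.det_mul, Matrix.det_mul, Matrix.det_transpose, hJdet]
    have hW : W.det = V.det := Matrix.det_submatrix_equiv_self e V
    rw [hW, mul_one]
    exact mul_ne_zero hVdet hVdet
  rw [Matrix.isUnit_iff_isUnit_det]
  exact isUnit_iff_ne_zero.2 hBdet
end

section
/- Let K be a field, m ≥ 1, and b₁, …, b_{2m+1} ∈ K pairwise distinct elements. Then the (2m+1) × (2m+1) matrix B with entries B_{pq} = Σ_{i=1}^{m} (b_p·b_q)^{2(i−1)}·(b_p − b_q) has rank exactly 2m. (This is the key rank computation, for even genus g = 2m + 2, showing that the skew-symmetrized Massey product associated to the quadratic relation built from the polynomials Hᵢ = t^{2(i−1)} on a hyperelliptic curve has rank 2g − 4.) -/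
open Matrix

lemma aux_sum_pair {A : Type*} [AddCommMonoid A] (m : ℕ) (f : ℕ → A) :
    ∑ j : Fin (2 * m), f (j : ℕ) = ∑ i ∈ Finset.range m, (f (2 * i) + f (2 * i + 1)) := by
  rw [Fin.sum_univ_eq_sum_range]
  induction m with
  | zero => simp
  | succ n ih =>
    rw [show 2 * (n + 1) = 2 * n + 1 + 1 by ring, Finset.sum_range_succ, Finset.sum_range_succ,
      Finset.sum_range_succ, ih, add_assoc]

lemma aux_vand {K : Type*} [Field K] {n : ℕ} (c : Fin n → K) (b : Fin (n + 1) → K)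
    (hb : Function.Injective b) (h : ∀ q : Fin n, ∑ j : Fin n, c j * b (Fin.castSucc q) ^ (j : ℕ) = 0) :
    c = 0 :=
  Matrix.eq_zero_of_forall_index_sum_mul_pow_eq_zero
    (f := b ∘ Fin.castSucc) (hb.comp (Fin.castSucc_injective n)) h

/-- let `K` be a field, `m ≥ 1`, and `b₁, …, b_{2m+1} ∈ K` pairwise distinct.
Then the `(2m+1) × (2m+1)` (skew-symmetric) matrix `B` with entries
`B_{pq} = Σ_{i=1}^{m} (b_p b_q)^{2(i−1)} (b_p − b_q)` has rank exactly `2m`. -/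
theorem stmt_15 {K : Type*} [Field K] (m : ℕ) (hm : 1 ≤ m)
    (b : Fin (2 * m + 1) → K) (hb : Function.Injective b)
    (B : Matrix (Fin (2 * m + 1)) (Fin (2 * m + 1)) K)
    (hB : ∀ p q, B p q = ∑ i ∈ Finset.range m, (b p * b q) ^ (2 * i) * (b p - b q)) :
    B.rank = 2 * m := by
  set M : Matrix (Fin (2 * m + 1)) (Fin (2 * m)) K := fun p j => b p ^ (j : ℕ) with hM
  set N : Matrix (Fin (2 * m)) (Fin (2 * m + 1)) K := fun j q =>
    if Even (j : ℕ) then -(b q ^ ((j : ℕ) + 1)) else b q ^ ((j : ℕ) - 1) with hN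
  -- auxiliary: extension of a vector on Fin (2m) by zero
  have hBMN : B = M * N := by
    ext p q
    rw [hB, Matrix.mul_apply]
    refine Eq.symm ?_
    calc ∑ j : Fin (2 * m), M p j * N j q
        = ∑ j : Fin (2 * m),
            (fun jn : ℕ => b p ^ jn * (if Even jn then -(b q ^ (jn + 1)) else b q ^ (jn - 1))) (j : ℕ) := rfl
      _ = ∑ i ∈ Finset.range m,
            ((fun jn : ℕ => b p ^ jn * (if Even jn then -(b q ^ (jn + 1)) else b q ^ (jn - 1))) (2 * i)
            + (fun jn : ℕ => b p ^ jn * (if Even jn then -(b q ^ (jn + 1)) else b q ^ (jn - 1))) (2 * i + 1)) :=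
          aux_sum_pair m (fun jn : ℕ => b p ^ jn * (if Even jn then -(b q ^ (jn + 1)) else b q ^ (jn - 1)))
      _ = ∑ i ∈ Finset.range m, (b p * b q) ^ (2 * i) * (b p - b q) := by
          refine Finset.sum_congr rfl fun i _ => ?_
          have h1 : Even (2 * i) := even_two_mul i
          have h2 : ¬ Even (2 * i + 1) := by simp [Nat.even_add_one, h1]
          simp only [if_pos h1, if_neg h2, Nat.add_sub_cancel]
          ring
  -- injectivity of mulVecLin M
  have hMinj : Function.Injective M.mulVecLin := by
    rw [← LinearMap.ker_eq_bot, LinearMap.ker_eq_bot']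
    intro x hx
    have hx' : ∀ q : Fin (2 * m), ∑ j : Fin (2 * m), x j * b (Fin.castSucc q) ^ (j : ℕ) = 0 := by
      intro q
      have := congrFun hx (Fin.castSucc q)
      simp only [Matrix.mulVecLin_apply, Matrix.mulVec, dotProduct, Pi.zero_apply] at this ⊢
      rw [← this]
      exact Finset.sum_congr rfl fun j _ => mul_comm _ _
    exact aux_vand x b hb hx'
  -- injectivity of mulVecLin Nᵀ
  have hNinj : Function.Injective Nᵀ.mulVecLin := by
    rw [← LinearMap.ker_eq_bot, LinearMap.ker_eq_bot']
    intro x hx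
    set X : ℕ → K := fun n => if h : n < 2 * m then x ⟨n, h⟩ else 0 with hX
    set c : Fin (2 * m) → K := fun k =>
      if Even (k : ℕ) then X ((k : ℕ) + 1) else -X ((k : ℕ) - 1) with hc
    have key : ∀ q : Fin (2 * m + 1), ∑ j : Fin (2 * m), c j * b q ^ (j : ℕ) = 0 := by
      intro q
      have h0 := congrFun hx q
      simp only [Matrix.mulVecLin_apply, Matrix.mulVec, dotProduct, Pi.zero_apply,
        Matrix.transpose_apply] at h0
      -- h0 : ∑ j, N j q * x j = 0
      have e1 : ∑ j : Fin (2 * m), N j q * x j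
          = ∑ j : Fin (2 * m),
            (fun jn : ℕ => (if Even jn then -(b q ^ (jn + 1)) else b q ^ (jn - 1)) * X jn) (j : ℕ) := by
        refine Finset.sum_congr rfl fun j _ => ?_
        have : X (j : ℕ) = x j := by simp [hX, j.isLt]
        simp only [hN, this]
      have e2 : ∑ j : Fin (2 * m), c j * b q ^ (j : ℕ)
          = ∑ j : Fin (2 * m),
            (fun jn : ℕ => (if Even jn then X (jn + 1) else -X (jn - 1)) * b q ^ jn) (j : ℕ) := rfl
      rw [e2, aux_sum_pair m (fun jn : ℕ => (if Even jn then X (jn + 1) else -X (jn - 1)) * b q ^ jn),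
        ← h0, e1, aux_sum_pair m (fun jn : ℕ => (if Even jn then -(b q ^ (jn + 1)) else b q ^ (jn - 1)) * X jn)]
      refine Finset.sum_congr rfl fun i _ => ?_
      have h1 : Even (2 * i) := even_two_mul i
      have h2 : ¬ Even (2 * i + 1) := by simp [Nat.even_add_one, h1]
      simp only [if_pos h1, if_neg h2, Nat.add_sub_cancel]
      ring
    have hc0 : c = 0 := by
      apply aux_vand c b hb
      intro q; exact key _
    funext j
    rcases Nat.even_or_odd (j : ℕ) with hj | hj
    · -- use c ⟨j+1⟩
      have hlt : (j : ℕ) + 1 < 2 * m := by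
        rcases hj with ⟨t, ht⟩
        have := j.isLt
        omega
      have := congrFun hc0 ⟨(j : ℕ) + 1, hlt⟩
      have hodd : ¬ Even ((j : ℕ) + 1) := by simp [Nat.even_add_one, hj]
      simp only [hc, hodd, if_neg, Pi.zero_apply, Nat.add_sub_cancel, if_false] at this
      have hXj : X (j : ℕ) = x j := by simp [hX, j.isLt]
      rw [hXj] at this
      simpa using neg_eq_zero.mp this
    · have hj' : ¬ Even (j : ℕ) := Nat.not_even_iff_odd.mpr hj
      have hpos : 1 ≤ (j : ℕ) := by
        rcases hj with ⟨t, ht⟩; omega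
      have hlt : (j : ℕ) - 1 < 2 * m := by have := j.isLt; omega
      have heven : Even ((j : ℕ) - 1) := by
        rcases hj with ⟨t, ht⟩
        exact ⟨t, by omega⟩
      have := congrFun hc0 ⟨(j : ℕ) - 1, hlt⟩
      simp only [hc, heven, if_true, Pi.zero_apply] at this
      have harith : (j : ℕ) - 1 + 1 = (j : ℕ) := by omega
      rw [harith] at this
      have hXj : X (j : ℕ) = x j := by simp [hX, j.isLt]
      rw [hXj] at this
      exact this
  -- rank computation
  have h1 : (M * N).rank = N.rank := by
    rw [Matrix.rank, Matrix.rank, Matrix.mulVecLin_mul, LinearMap.range_comp]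
    exact (LinearEquiv.finrank_eq (Submodule.equivMapOfInjective _ hMinj _)).symm
  have h2 : N.rank = 2 * m := by
    rw [← Matrix.rank_transpose, Matrix.rank, LinearMap.finrank_range_of_inj hNinj,
      Module.finrank_fin_fun]
  rw [hBMN, h1, h2]
end

section
/- Let R be a commutative ring, N ⊆ R a nilpotent ideal, f ∈ R, and n ∈ N². Let S be the localization of R away from f. Then f + n maps to a unit of S, and the two R-submodules of S given by Σ_{k≥0} N^{2k}·f^{−k} (the submodule generated by all elements x·f^{−k} with x ∈ N^{2k}, k ≥ 0) and Σ_{k≥0} N^{2k}·(f+n)^{−k} coincide. (The sheaf of rings 𝒜_D = 𝒪_S + 𝒩²(D) + 𝒩⁴(2D) + … depends only on the reduced divisor, not on the chosen even extension of its local equation.) -/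
open Finset

lemma aux16 {R S : Type*} [CommRing R] [CommRing S] [Algebra R S]
    (N : Ideal R) (hN : IsNilpotent N) (g m : R) (hm : m ∈ N ^ 2)
    (u w : Sˣ) (hu : (u : S) = algebraMap R S g)
    (hw : (w : S) = algebraMap R S (g + m)) :
    Submodule.span R {s : S | ∃ (k : ℕ) (x : R), x ∈ N ^ (2 * k) ∧
        s * (algebraMap R S g) ^ k = algebraMap R S x} ≤
    Submodule.span R {s : S | ∃ (k : ℕ) (x : R), x ∈ N ^ (2 * k) ∧
        s * (algebraMap R S (g + m)) ^ k = algebraMap R S x} := by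
  obtain ⟨t, ht⟩ := hN
  have hmN : m ∈ N := (Ideal.pow_le_self two_ne_zero) hm
  have hmt : m ^ t = 0 := by
    have := Ideal.pow_mem_pow hmN t
    rw [ht] at this
    simpa using this
  obtain ⟨a, ha_def⟩ : ∃ a : S, a = algebraMap R S m * ((↑w⁻¹ : S)) := ⟨_, rfl⟩
  have ha : a ^ t = 0 := by
    rw [ha_def, mul_pow, ← map_pow, hmt, map_zero, zero_mul]
  have hva : IsUnit (1 - a) := IsNilpotent.isUnit_one_sub ⟨t, ha⟩
  obtain ⟨v, hv⟩ := hva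
  have hvinv : ((v⁻¹ : Sˣ) : S) = ∑ i ∈ range t, a ^ i := by
    apply Units.inv_eq_of_mul_eq_one_right
    rw [hv, mul_comm, geom_sum_mul_neg, ha, sub_zero]
  have hww2 : (algebraMap R S g + algebraMap R S m) * ((↑w⁻¹ : S)) = 1 := by
    rw [← map_add, ← hw]; exact w.mul_inv
  have huwv : u = w * v := by
    apply Units.ext
    rw [Units.val_mul, hv, hu, hw, map_add, ha_def]
    linear_combination (algebraMap R S m) * hww2
  -- key induction
  have key : ∀ (j k : ℕ) (x : R), x ∈ N ^ (2 * k) →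
      algebraMap R S x * ((↑w⁻¹ : S)) ^ k * ((↑v⁻¹ : S)) ^ j ∈
        Submodule.span R {s : S | ∃ (k : ℕ) (x : R), x ∈ N ^ (2 * k) ∧
          s * (algebraMap R S (g + m)) ^ k = algebraMap R S x} := by
    intro j
    induction j with
    | zero =>
      intro k x hx
      rw [pow_zero, mul_one]
      refine Submodule.subset_span ⟨k, x, hx, ?_⟩
      rw [← hw, mul_assoc, ← mul_pow, w.inv_mul, one_pow, mul_one]
    | succ j ih =>
      intro k x hx
      have step : algebraMap R S x * ((↑w⁻¹ : S)) ^ k * ((↑v⁻¹ : S)) ^ (j + 1) =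
          ∑ i ∈ range t,
            algebraMap R S (x * m ^ i) * ((↑w⁻¹ : S)) ^ (k + i) * ((↑v⁻¹ : S)) ^ j := by
        rw [pow_succ', ← mul_assoc, hvinv, Finset.mul_sum, Finset.sum_mul]
        refine Finset.sum_congr rfl fun i _ => ?_
        rw [ha_def, map_mul, map_pow, mul_pow, pow_add]
        ring
      rw [step]
      refine Submodule.sum_mem _ fun i _ => ih (k + i) (x * m ^ i) ?_
      have h3 : m ^ i ∈ N ^ (2 * i) := by
        have := Ideal.pow_mem_pow hm i
        rwa [← pow_mul] at this
      have := Ideal.mul_mem_mul hx h3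
      rwa [← pow_add, ← mul_add] at this
  rw [Submodule.span_le]
  rintro s ⟨k, x, hx, hs⟩
  have hs' : s = algebraMap R S x * ((↑w⁻¹ : S)) ^ k * ((↑v⁻¹ : S)) ^ k := by
    have h1 : s * ((u : S)) ^ k = algebraMap R S x := by rw [hu]; exact hs
    have h2 : ((u : S)) ^ k * ((↑u⁻¹ : S)) ^ k = 1 := by
      rw [← mul_pow, u.mul_inv, one_pow]
    calc s = s * ((u : S)) ^ k * ((↑u⁻¹ : S)) ^ k := by rw [mul_assoc, h2, mul_one]
    _ = algebraMap R S x * ((↑w⁻¹ : S)) ^ k * ((↑v⁻¹ : S)) ^ k := by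
        rw [h1, huwv, mul_inv, Units.val_mul, mul_pow, mul_assoc]
  rw [hs']
  exact key k k x hx

/-- let `R` be a commutative ring, `N ⊆ R` a nilpotent ideal, `f ∈ R` and
`n ∈ N²`.  In the localization `S = R[1/f]`, the element `f + n` becomes a unit, and the
`R`-submodule `Σ_{k≥0} N^{2k}·f^{−k}` of `S` coincides with `Σ_{k≥0} N^{2k}·(f+n)^{−k}`.
Here the submodule `Σ_{k≥0} N^{2k}·g^{−k}` (for `g` invertible in `S`) is expressed as the
`R`-span of all `s ∈ S` such that `s · g^k = x` in `S` for some `k ≥ 0` and some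
`x ∈ N^{2k}`. -/
theorem stmt_16 {R : Type*} [CommRing R] (N : Ideal R) (hN : IsNilpotent N)
    (f : R) (n : R) (hn : n ∈ N ^ 2) :
    IsUnit (algebraMap R (Localization.Away f) (f + n)) ∧
    Submodule.span R {s : Localization.Away f | ∃ (k : ℕ) (x : R), x ∈ N ^ (2 * k) ∧
        s * (algebraMap R (Localization.Away f) f) ^ k =
          algebraMap R (Localization.Away f) x} =
      Submodule.span R {s : Localization.Away f | ∃ (k : ℕ) (x : R), x ∈ N ^ (2 * k) ∧
        s * (algebraMap R (Localization.Away f) (f + n)) ^ k =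
          algebraMap R (Localization.Away f) x} := by
  set S := Localization.Away f
  have hfu : IsUnit (algebraMap R S f) := IsLocalization.Away.algebraMap_isUnit f
  obtain ⟨t, ht⟩ := hN
  have hnt : n ^ t = 0 := by
    have := Ideal.pow_mem_pow ((Ideal.pow_le_self two_ne_zero) hn) t
    rw [ht] at this; simpa using this
  have hnnil : IsNilpotent (algebraMap R S n) := ⟨t, by rw [← map_pow, hnt, map_zero]⟩
  have hfnu : IsUnit (algebraMap R S (f + n)) := by
    rw [map_add]
    exact hnnil.isUnit_add_left_of_commute hfu (Commute.all _ _)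
  refine ⟨hfnu, le_antisymm ?_ ?_⟩
  · exact aux16 N ⟨t, ht⟩ f n hn hfu.unit hfnu.unit hfu.unit_spec hfnu.unit_spec
  · have h := aux16 N ⟨t, ht⟩ (f + n) (-n) (neg_mem hn) hfnu.unit hfu.unit
      hfnu.unit_spec (by rw [add_neg_cancel_right]; exact hfu.unit_spec)
    rwa [add_neg_cancel_right] at h
end

section
/- Let R be a commutative ring, N ⊆ R a nilpotent ideal, and f ∈ R such that for every i ≥ 0 and every x ∈ N^i, if f·x ∈ N^{i+1} then x ∈ N^{i+1} (f acts injectively on each graded piece N^i/N^{i+1}; here N⁰ = R). Let S be the localization of R away from f, and inside S define the R-submodules A = Σ_{k≥0} N^{2k}·f^{−k} and I = Σ_{k≥0} N^{2k+1}·f^{−k}. Then I ⊆ A, and the assignment sending (the class of) a₀ + a₂·f^{−1} + a₄·f^{−2} + ⋯ (with a_{2k} ∈ N^{2k}) to (a₀ mod N, (a_{2k} mod (N^{2k+1} + f·N^{2k}))_{k≥1}) is a well-defined isomorphism of R-modules A/I ≅ (R/N) ⊕ ⊕_{k≥1} N^{2k}/(N^{2k+1} + f·N^{2k}). -/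
open DirectSum

/-- The `R`-submodule `Σ_{k≥0} N^{2k}·f^{−k}` of the localization `R[1/f]`: the `R`-span of
all `s` with `s·f^k = x` for some `k` and some `x ∈ N^{2k}`. -/
abbrev AD {R : Type*} [CommRing R] (N : Ideal R) (f : R) :
    Submodule R (Localization.Away f) :=
  Submodule.span R {s : Localization.Away f | ∃ (k : ℕ) (x : R), x ∈ N ^ (2 * k) ∧
    s * (algebraMap R (Localization.Away f) f) ^ k = algebraMap R (Localization.Away f) x}

/-- The `R`-submodule `Σ_{k≥0} N^{2k+1}·f^{−k}` of the localization `R[1/f]`. -/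
abbrev ID {R : Type*} [CommRing R] (N : Ideal R) (f : R) :
    Submodule R (Localization.Away f) :=
  Submodule.span R {s : Localization.Away f | ∃ (k : ℕ) (x : R), x ∈ N ^ (2 * k + 1) ∧
    s * (algebraMap R (Localization.Away f) f) ^ k = algebraMap R (Localization.Away f) x}

/-- The graded piece `N^{2k} / (N^{2k+1} + f·N^{2k})`. -/
abbrev gradedPiece {R : Type*} [CommRing R] (N : Ideal R) (f : R) (k : ℕ) :=
  ↥(N ^ (2 * k) : Ideal R) ⧸
    (Submodule.comap (N ^ (2 * k) : Ideal R).subtype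
      ((N ^ (2 * k + 1) : Ideal R) ⊔ Ideal.span {f} * N ^ (2 * k)))


section aux
variable {R : Type*} [CommRing R] (N : Ideal R) (f : R)

lemma freg1 (hreg : ∀ (i : ℕ) (x : R), x ∈ N ^ i → f * x ∈ N ^ (i + 1) → x ∈ N ^ (i + 1)) :
    ∀ (j : ℕ) (x : R), f * x ∈ N ^ j → x ∈ N ^ j := by
  intro j
  induction j with
  | zero => intro x _; simpa using Submodule.mem_top
  | succ j ih =>
    intro x hx
    exact hreg j x (ih x (Ideal.pow_le_pow_right (Nat.le_succ j) hx)) hx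

lemma fregt (hreg : ∀ (i : ℕ) (x : R), x ∈ N ^ i → f * x ∈ N ^ (i + 1) → x ∈ N ^ (i + 1)) :
    ∀ (t j : ℕ) (x : R), f ^ t * x ∈ N ^ j → x ∈ N ^ j := by
  intro t
  induction t with
  | zero => intro j x hx; simpa using hx
  | succ t ih =>
    intro j x hx
    refine ih j x (freg1 N f hreg j _ ?_)
    rw [← mul_assoc, ← pow_succ']
    exact hx

lemma chainKey (hreg : ∀ (i : ℕ) (x : R), x ∈ N ^ i → f * x ∈ N ^ (i + 1) → x ∈ N ^ (i + 1))
    (M : ℕ) (z : ℕ → R) (hz : ∀ k, z k ∈ N ^ (2 * k)) (hz0 : ∀ k, M < k → z k = 0)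
    (hsum : ∑ k ∈ Finset.range (M + 1), f ^ (M - k) * z k = 0) :
    z 0 ∈ N ∧ ∀ k, z (k + 1) ∈ (N ^ (2 * (k + 1) + 1) ⊔ Ideal.span {f} * N ^ (2 * (k + 1)) : Ideal R) := by
  set S : ℕ → R := fun j => ∑ i ∈ Finset.range (j + 1), f ^ (j - i) * z i with hS
  have step : ∀ j, S (j + 1) = f * S j + z (j + 1) := by
    intro j
    rw [hS]
    simp only [Finset.sum_range_succ (n := j + 1)]
    rw [Nat.sub_self, pow_zero, one_mul, Finset.mul_sum]
    congr 1
    refine Finset.sum_congr rfl fun i hi => ?_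
    rw [Finset.mem_range] at hi
    rw [Nat.succ_sub (Nat.lt_succ_iff.mp hi), pow_succ']
    ring
  have SM : S M = 0 := hsum
  have Szero : ∀ j, M ≤ j → S j = 0 := by
    intro j hj
    induction j, hj using Nat.le_induction with
    | base => exact SM
    | succ j hj ih => rw [step, ih, hz0 (j+1) (Nat.lt_succ_of_le hj), mul_zero, add_zero]
  have keymem : ∀ d j, M ≤ j + d → S j ∈ N ^ (2 * j + 2) := by
    intro d
    induction d with
    | zero => intro j hj; rw [Szero j (by simpa using hj)]; exact Submodule.zero_mem _
    | succ d ih =>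
      intro j hj
      rcases le_or_gt M j with h | h
      · rw [Szero j h]; exact Submodule.zero_mem _
      · have h1 : S (j + 1) ∈ N ^ (2 * (j+1) + 2) := ih (j + 1) (by omega)
        have h2 : f * S j ∈ N ^ (2 * j + 2) := by
          have : f * S j = S (j + 1) - z (j + 1) := by rw [step]; ring
          rw [this]
          exact Submodule.sub_mem _ (Ideal.pow_le_pow_right (by omega) h1)
            (Ideal.pow_le_pow_right (by omega) (hz (j + 1)))
        exact freg1 N f hreg _ _ h2
  have hSmem : ∀ j, S j ∈ N ^ (2 * j + 2) := fun j => keymem M j (by omega)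
  constructor
  · have : z 0 = S 0 := by simp [hS]
    rw [this]
    have := Ideal.pow_le_pow_right (show 1 ≤ 2 * 0 + 2 by omega) (hSmem 0)
    simpa using this
  · intro k
    have hz' : z (k + 1) = S (k + 1) - f * S k := by rw [step]; ring
    rw [hz']
    refine Submodule.sub_mem _ (Submodule.mem_sup_left ?_) (Submodule.mem_sup_right ?_)
    · exact Ideal.pow_le_pow_right (by omega) (hSmem (k + 1))
    · exact Ideal.mul_mem_mul (Ideal.mem_span_singleton_self f) (hSmem k)

end aux

section aux2
variable {R : Type*} [CommRing R] (N : Ideal R) (f : R)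

def Pred (m : ℕ) (y : R) : Prop :=
  ∃ c : ℕ → R, (∀ j, c j ∈ N ^ (2 * j + 1)) ∧
    y = ∑ j ∈ Finset.range (m + 1), f ^ (m - j) * c j

lemma Pred_zero (m : ℕ) : Pred N f m 0 :=
  ⟨0, fun j => Submodule.zero_mem _, by simp⟩

lemma Pred_shift {m : ℕ} {y : R} (d : ℕ) (h : Pred N f m y) : Pred N f (m + d) (f ^ d * y) := by
  classical
  obtain ⟨c, hc, rfl⟩ := h
  refine ⟨fun j => if j ≤ m then c j else 0, fun j => ?_, ?_⟩
  · dsimp only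
    split
    · exact hc j
    · exact Submodule.zero_mem _
  · dsimp only
    have hsub : ∑ j ∈ Finset.range (m + d + 1), f ^ (m + d - j) * (if j ≤ m then c j else 0)
        = ∑ j ∈ Finset.range (m + 1), f ^ (m + d - j) * (if j ≤ m then c j else 0) :=
      (Finset.sum_subset (Finset.range_subset_range.mpr (by omega)) (fun j _ hj => by
        rw [Finset.mem_range, not_lt] at hj
        rw [if_neg (by omega), mul_zero])).symm
    rw [hsub, Finset.mul_sum]
    refine Finset.sum_congr rfl fun j hj => ?_
    rw [Finset.mem_range] at hj
    rw [if_pos (by omega), ← mul_assoc, ← pow_add]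
    congr 2
    omega

lemma Pred_add {m : ℕ} {y y' : R} (h : Pred N f m y) (h' : Pred N f m y') :
    Pred N f m (y + y') := by
  obtain ⟨c, hc, rfl⟩ := h
  obtain ⟨c', hc', rfl⟩ := h'
  exact ⟨c + c', fun j => Submodule.add_mem _ (hc j) (hc' j), by
    rw [← Finset.sum_add_distrib]
    exact Finset.sum_congr rfl fun j _ => by simp [Pi.add_apply]; ring⟩

lemma Pred_smul {m : ℕ} {y : R} (r : R) (h : Pred N f m y) : Pred N f m (r * y) := by
  obtain ⟨c, hc, rfl⟩ := h
  exact ⟨fun j => r * c j, fun j => Ideal.mul_mem_left _ _ (hc j), by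
    rw [Finset.mul_sum]; exact Finset.sum_congr rfl fun j _ => by ring⟩

lemma mem_ID_rep {a : Localization.Away f} (ha : a ∈ ID N f) :
    ∃ (m : ℕ) (y : R), Pred N f m y ∧
      a * (algebraMap R (Localization.Away f) f) ^ m = algebraMap R (Localization.Away f) y := by
  classical
  induction ha using Submodule.span_induction with
  | mem s hs =>
    obtain ⟨k, x, hx, hsx⟩ := hs
    refine ⟨k, x, ⟨fun j => if j = k then x else 0, fun j => ?_, ?_⟩, hsx⟩
    · dsimp only
      split
      · subst ‹j = k›; exact hx
      · exact Submodule.zero_mem _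
    · dsimp only
      rw [Finset.sum_eq_single k]
      · simp
      · intro j _ hj; rw [if_neg hj, mul_zero]
      · intro h; exact absurd (Finset.self_mem_range_succ k) h
  | zero => exact ⟨0, 0, Pred_zero N f 0, by simp⟩
  | add a b _ _ iha ihb =>
    obtain ⟨m1, y1, hP1, he1⟩ := iha
    obtain ⟨m2, y2, hP2, he2⟩ := ihb
    refine ⟨m1 + m2, f ^ m2 * y1 + f ^ m1 * y2,
      Pred_add N f (Pred_shift N f m2 hP1)
        (by rw [Nat.add_comm m1 m2]; exact Pred_shift N f m1 hP2), ?_⟩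
    rw [map_add, add_mul, map_mul, map_mul, map_pow, map_pow, ← he1, ← he2, pow_add]
    ring
  | smul r a _ ih =>
    obtain ⟨m, y, hP, he⟩ := ih
    refine ⟨m, r * y, Pred_smul N f r hP, ?_⟩
    rw [smul_mul_assoc, he, map_mul, Algebra.smul_def]

end aux2

section maps
variable {R : Type*} [CommRing R] (N : Ideal R) (f : R)

noncomputable def uinv : Localization.Away f := IsLocalization.Away.invSelf f

lemma fu : algebraMap R (Localization.Away f) f * uinv f = 1 :=
  IsLocalization.Away.mul_invSelf f

lemma memAD (k : ℕ) (x : R) (hx : x ∈ N ^ (2 * k)) :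
    algebraMap R (Localization.Away f) x * uinv f ^ k ∈ AD N f := by
  refine Submodule.subset_span ⟨k, x, hx, ?_⟩
  rw [mul_assoc, ← mul_pow, mul_comm (uinv f), fu, one_pow, mul_one]

lemma memID (k : ℕ) (x : R) (hx : x ∈ N ^ (2 * k + 1)) :
    algebraMap R (Localization.Away f) x * uinv f ^ k ∈ ID N f := by
  refine Submodule.subset_span ⟨k, x, hx, ?_⟩
  rw [mul_assoc, ← mul_pow, mul_comm (uinv f), fu, one_pow, mul_one]

lemma memAD0 (x : R) : algebraMap R (Localization.Away f) x ∈ AD N f := by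
  have := memAD N f 0 x (by simp)
  simpa using this

lemma memID_sup (k : ℕ) (x : R)
    (hx : x ∈ (N ^ (2 * (k + 1) + 1) ⊔ Ideal.span {f} * N ^ (2 * (k + 1)) : Ideal R)) :
    algebraMap R (Localization.Away f) x * uinv f ^ (k + 1) ∈ ID N f := by
  obtain ⟨u, hu, w, hw, rfl⟩ := Submodule.mem_sup.mp hx
  rw [map_add, add_mul]
  refine Submodule.add_mem _ (memID N f (k + 1) u hu) ?_
  refine Submodule.mul_induction_on hw ?_ ?_
  · intro a ha b hb
    obtain ⟨r, rfl⟩ := Ideal.mem_span_singleton'.mp ha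
    have heq : algebraMap R (Localization.Away f) (r * f * b) * uinv f ^ (k + 1)
        = algebraMap R (Localization.Away f) f * uinv f *
          (r • (algebraMap R (Localization.Away f) b * uinv f ^ k)) := by
      rw [map_mul, map_mul, Algebra.smul_def, pow_succ]
      ring
    rw [heq, fu, one_mul]
    exact Submodule.smul_mem _ r (memID N f k b (Ideal.pow_le_pow_right (by omega) hb))
  · intro a b ha hb
    rw [map_add, add_mul]
    exact Submodule.add_mem _ ha hb

/-- quotient of A by I -/
noncomputable abbrev AmodI := ↥(AD N f) ⧸ (ID N f).comap (AD N f).subtype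

noncomputable def phiTop : (R ⧸ N) →ₗ[R] AmodI N f :=
  Submodule.liftQ N
    (((ID N f).comap (AD N f).subtype).mkQ ∘ₗ
      LinearMap.codRestrict (AD N f) (Algebra.linearMap R (Localization.Away f))
        (fun r => memAD0 N f r))
    (by
      intro r hr
      rw [LinearMap.mem_ker, LinearMap.comp_apply, Submodule.mkQ_apply,
        Submodule.Quotient.mk_eq_zero]
      have := memID N f 0 r (by simpa using hr)
      simp at this; exact this)

noncomputable def phiPiece (k : ℕ) : gradedPiece N f (k + 1) →ₗ[R] AmodI N f :=
  Submodule.liftQ _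
    (((ID N f).comap (AD N f).subtype).mkQ ∘ₗ
      LinearMap.codRestrict (AD N f)
        ((uinv f ^ (k + 1)) • ((Algebra.linearMap R (Localization.Away f)) ∘ₗ
          (N ^ (2 * (k + 1))).subtype))
        (fun x => by
          have := memAD N f (k + 1) x.1 x.2
          simpa [mul_comm] using this))
    (by
      intro x hxm
      rw [LinearMap.mem_ker, LinearMap.comp_apply, Submodule.mkQ_apply,
        Submodule.Quotient.mk_eq_zero]
      have := memID_sup N f k x.1 hxm
      simpa [mul_comm] using this)

noncomputable def psi : ((R ⧸ N) × ⨁ (k : ℕ), gradedPiece N f (k + 1)) →ₗ[R] AmodI N f :=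
  LinearMap.coprod (phiTop N f)
    (DirectSum.toModule R ℕ (AmodI N f) (phiPiece N f))

lemma psi_mk_r (r : R) :
    psi N f (Ideal.Quotient.mk N r, 0) =
      Submodule.Quotient.mk ⟨algebraMap R (Localization.Away f) r, memAD0 N f r⟩ := by
  rw [psi, LinearMap.coprod_apply, map_zero, add_zero]
  rfl

lemma psi_mk_of (k : ℕ) (x : R) (hx : x ∈ N ^ (2 * (k + 1))) :
    psi N f (0, DirectSum.of (fun k => gradedPiece N f (k + 1)) k
        (Submodule.Quotient.mk ⟨x, hx⟩)) =
      Submodule.Quotient.mk ⟨algebraMap R (Localization.Away f) x * uinv f ^ (k + 1),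
        memAD N f (k + 1) x hx⟩ := by
  rw [psi, LinearMap.coprod_apply, map_zero, zero_add, ← DirectSum.lof_eq_of R,
    DirectSum.toModule_lof]
  show Submodule.Quotient.mk _ = _
  congr 1
  exact Subtype.ext (by simp [mul_comm])

end maps

section surj
variable {R : Type*} [CommRing R] (N : Ideal R) (f : R)

lemma psi_surj : Function.Surjective (psi N f) := by
  intro q
  obtain ⟨⟨s, hs⟩, rfl⟩ := Submodule.Quotient.mk_surjective _ q
  induction hs using Submodule.span_induction with
  | mem s hsmem =>
    obtain ⟨k, x, hx, hsx⟩ := hsmem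
    match k with
    | 0 =>
      refine ⟨(Ideal.Quotient.mk N x, 0), ?_⟩
      rw [psi_mk_r]
      have hs0 : s = algebraMap R (Localization.Away f) x := by simpa using hsx
      congr 1
      exact Subtype.ext hs0.symm
    | k + 1 =>
      have h1 : (algebraMap R (Localization.Away f) f * uinv f) ^ (k + 1) = 1 := by
        rw [fu, one_pow]
      have hseq : s = algebraMap R (Localization.Away f) x * uinv f ^ (k + 1) := by
        have h2 : s = s * ((algebraMap R (Localization.Away f) f) ^ (k + 1) *
            uinv f ^ (k + 1)) := by rw [← mul_pow, h1, mul_one]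
        rw [← mul_assoc, hsx] at h2
        exact h2
      refine ⟨(0, DirectSum.of (fun k => gradedPiece N f (k + 1)) k
        (Submodule.Quotient.mk ⟨x, hx⟩)), ?_⟩
      rw [psi_mk_of]
      congr 1
      exact Subtype.ext hseq.symm
  | zero =>
    refine ⟨0, ?_⟩
    rw [map_zero]
    symm
    rw [show (⟨0, Submodule.zero_mem _⟩ : ↥(AD N f)) = 0 from Subtype.ext rfl,
      Submodule.Quotient.mk_zero]
  | add x y hx hy ihx ihy =>
    obtain ⟨w1, h1⟩ := ihx
    obtain ⟨w2, h2⟩ := ihy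
    refine ⟨w1 + w2, ?_⟩
    rw [map_add, h1, h2, ← Submodule.Quotient.mk_add]
    congr 1
  | smul a x hx ih =>
    obtain ⟨w, h⟩ := ih
    refine ⟨a • w, ?_⟩
    rw [map_smul, h, ← Submodule.Quotient.mk_smul]
    congr 1

end surj

section inj
variable {R : Type*} [CommRing R] (N : Ideal R) (f : R)

set_option maxHeartbeats 2000000 in
lemma psi_ker (hN : IsNilpotent N)
    (hreg : ∀ (i : ℕ) (x : R), x ∈ N ^ i → f * x ∈ N ^ (i + 1) → x ∈ N ^ (i + 1)) :
    ∀ w, psi N f w = 0 → w = 0 := by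
  classical
  obtain ⟨n, hn⟩ := hN
  rintro ⟨q, d⟩ hw
  obtain ⟨r, rfl⟩ := Ideal.Quotient.mk_surjective q
  have hrep : ∀ k, ∃ x : R, ∃ hx : x ∈ N ^ (2 * (k + 1)),
      d k = Submodule.Quotient.mk ⟨x, hx⟩ := by
    intro k
    obtain ⟨⟨x, hx⟩, h⟩ := Submodule.Quotient.mk_surjective _ (d k)
    exact ⟨x, hx, h.symm⟩
  choose x hx hdx using hrep
  have hx0 : ∀ k, n ≤ k + 1 → x k = 0 := by
    intro k hk
    have h1 : N ^ (2 * (k + 1)) ≤ N ^ n := Ideal.pow_le_pow_right (by omega)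
    have h2 := h1 (hx k)
    rw [hn] at h2
    simpa using h2
  have hd0 : ∀ k, n ≤ k + 1 → d k = 0 := by
    intro k hk
    rw [hdx k, show (⟨x k, hx k⟩ : ↥(N ^ (2 * (k + 1)))) = 0 from Subtype.ext (hx0 k hk),
      Submodule.Quotient.mk_zero]
  have hsupp : (DFinsupp.support d) ⊆ Finset.range n := by
    intro k hk
    rw [Finset.mem_range]
    by_contra hc
    exact (DFinsupp.mem_support_iff.mp hk) (hd0 k (by omega))
  have hd : (∑ k ∈ Finset.range n,
      DirectSum.of (fun k => gradedPiece N f (k + 1)) k (d k)) = d :=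
    ((Finset.sum_subset hsupp (fun k _ hk => by
      rw [DFinsupp.notMem_support_iff.mp hk, map_zero])).symm.trans
      (DirectSum.sum_support_of _))
  -- the combined element
  have haA : algebraMap R (Localization.Away f) r + ∑ k ∈ Finset.range n,
      algebraMap R (Localization.Away f) (x k) * uinv f ^ (k + 1) ∈ AD N f :=
    Submodule.add_mem _ (memAD0 N f r)
      (Submodule.sum_mem _ fun k _ => memAD N f (k + 1) (x k) (hx k))
  have hsplit : psi N f (Ideal.Quotient.mk N r, d)
      = psi N f (Ideal.Quotient.mk N r, 0) + ∑ k ∈ Finset.range n,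
        psi N f (0, DirectSum.of (fun k => gradedPiece N f (k + 1)) k (d k)) := by
    rw [← map_sum, ← map_add]
    congr 1
    have h1 : (∑ k ∈ Finset.range n, (((0 : R ⧸ N),
        DirectSum.of (fun k => gradedPiece N f (k + 1)) k (d k)) :
          (R ⧸ N) × ⨁ (k : ℕ), gradedPiece N f (k + 1)))
        = (((0 : R ⧸ N), d) : (R ⧸ N) × ⨁ (k : ℕ), gradedPiece N f (k + 1)) := by
      rw [Prod.ext_iff]
      constructor
      · rw [Prod.fst_sum]; simp
      · rw [Prod.snd_sum]; exact hd
    rw [h1, Prod.mk_add_mk, add_zero, zero_add]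
  have hcomb : psi N f (Ideal.Quotient.mk N r, d) = Submodule.Quotient.mk ⟨_, haA⟩ := by
    rw [hsplit, psi_mk_r, Finset.sum_congr rfl (fun k (hk : k ∈ Finset.range n) => by
      rw [hdx k, psi_mk_of] :
      ∀ k ∈ Finset.range n, psi N f (0, DirectSum.of (fun k => gradedPiece N f (k + 1)) k (d k))
        = Submodule.Quotient.mk ⟨algebraMap R (Localization.Away f) (x k) * uinv f ^ (k + 1),
            memAD N f (k + 1) (x k) (hx k)⟩)]
    have hsub : (⟨_, haA⟩ : ↥(AD N f)) =
        ⟨algebraMap R (Localization.Away f) r, memAD0 N f r⟩ +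
        ∑ k ∈ Finset.range n, ⟨algebraMap R (Localization.Away f) (x k) * uinv f ^ (k + 1),
          memAD N f (k + 1) (x k) (hx k)⟩ := by
      apply Subtype.ext
      simp
    rw [hsub, Submodule.Quotient.mk_add, ← Submodule.mkQ_apply _ (∑ _ ∈ _, _), map_sum]
    simp only [Submodule.mkQ_apply]
  have haI : algebraMap R (Localization.Away f) r + ∑ k ∈ Finset.range n,
      algebraMap R (Localization.Away f) (x k) * uinv f ^ (k + 1) ∈ ID N f := by
    have h0 : Submodule.Quotient.mk (p := (ID N f).comap (AD N f).subtype) ⟨_, haA⟩ = 0 := by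
      rw [← hcomb]; exact hw
    exact Submodule.mem_comap.mp ((Submodule.Quotient.mk_eq_zero _).mp h0)
  obtain ⟨m, y, ⟨c, hc, hyc⟩, hay⟩ := mem_ID_rep N f haI
  set M := m + n with hM
  have hcompute : (algebraMap R (Localization.Away f) r + ∑ k ∈ Finset.range n,
      algebraMap R (Localization.Away f) (x k) * uinv f ^ (k + 1)) *
        (algebraMap R (Localization.Away f) f) ^ M
      = algebraMap R (Localization.Away f)
          (f ^ M * r + ∑ k ∈ Finset.range n, f ^ (M - (k + 1)) * x k) := by
    rw [add_mul, Finset.sum_mul, map_add, map_mul, map_pow, map_sum]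
    congr 1
    · ring
    refine Finset.sum_congr rfl fun k hk => ?_
    rw [Finset.mem_range] at hk
    have hkM : (k + 1) + (M - (k + 1)) = M := by omega
    rw [map_mul, map_pow]
    have hpow : (algebraMap R (Localization.Away f)) f ^ M
        = (algebraMap R (Localization.Away f)) f ^ (k + 1) *
          (algebraMap R (Localization.Away f)) f ^ (M - (k + 1)) := by
      rw [← pow_add, hkM]
    rw [hpow]
    have hmp : algebraMap R (Localization.Away f) (x k) * uinv f ^ (k + 1) *
        ((algebraMap R (Localization.Away f)) f ^ (k + 1) *
         (algebraMap R (Localization.Away f)) f ^ (M - (k + 1)))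
        = (algebraMap R (Localization.Away f) f * uinv f) ^ (k + 1) *
          ((algebraMap R (Localization.Away f)) f ^ (M - (k + 1)) *
           algebraMap R (Localization.Away f) (x k)) := by
      rw [mul_pow]; ring
    rw [hmp, fu, one_pow, one_mul]
  have h2 : algebraMap R (Localization.Away f)
      (f ^ M * r + ∑ k ∈ Finset.range n, f ^ (M - (k + 1)) * x k)
      = algebraMap R (Localization.Away f) (f ^ n * y) := by
    rw [← hcompute, hM, pow_add, ← mul_assoc, hay, map_mul, map_pow]
    ring
  obtain ⟨cc, hceq⟩ := (IsLocalization.eq_iff_exists (M := Submonoid.powers f)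
    (S := Localization.Away f)).mp h2
  obtain ⟨t, ht⟩ := cc.2
  rw [← ht] at hceq
  set M' := t + M with hM'
  set z : ℕ → R := fun k =>
    (if k = 0 then r else if k - 1 < n then x (k - 1) else 0) -
    (if k ≤ m then c k else 0) with hzdef
  have hzmem : ∀ k, z k ∈ N ^ (2 * k) := by
    intro k
    rw [hzdef]
    dsimp only
    refine Submodule.sub_mem _ ?_ ?_
    · match k with
      | 0 => simpa using Submodule.mem_top
      | k + 1 =>
        rw [if_neg (by omega)]
        split
        · exact hx k
        · exact Submodule.zero_mem _
    · split
      · exact Ideal.pow_le_pow_right (by omega) (hc k)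
      · exact Submodule.zero_mem _
  have hzvan : ∀ k, M' < k → z k = 0 := by
    intro k hk
    rw [hzdef]
    dsimp only
    rw [if_neg (by omega), if_neg (by omega), if_neg (by omega), sub_zero]
  have hsum : ∑ k ∈ Finset.range (M' + 1), f ^ (M' - k) * z k = 0 := by
    have hA : ∑ k ∈ Finset.range (M' + 1), f ^ (M' - k) *
        (if k = 0 then r else if k - 1 < n then x (k - 1) else 0)
        = f ^ t * (f ^ M * r + ∑ k ∈ Finset.range n, f ^ (M - (k + 1)) * x k) := by
      rw [Finset.sum_range_succ']
      have hterm : ∀ k ∈ Finset.range M', f ^ (M' - (k + 1)) *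
          (if k + 1 = 0 then r else if (k + 1) - 1 < n then x ((k + 1) - 1) else 0)
          = f ^ (M' - (k + 1)) * (if k < n then x k else 0) := by
        intro k _
        have h01 : (if k + 1 = 0 then r else if (k + 1) - 1 < n then x ((k + 1) - 1) else 0)
            = (if k < n then x k else 0) := by
          rw [if_neg (Nat.succ_ne_zero k), Nat.add_sub_cancel]
        rw [h01]
      rw [Finset.sum_congr rfl hterm]
      have hsub2 : ∑ k ∈ Finset.range M', f ^ (M' - (k + 1)) * (if k < n then x k else 0)
          = ∑ k ∈ Finset.range n, f ^ (M' - (k + 1)) * (if k < n then x k else 0) :=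
        (Finset.sum_subset (Finset.range_subset_range.mpr (by omega)) (fun k _ hk => by
          rw [Finset.mem_range, not_lt] at hk
          rw [if_neg (by omega), mul_zero])).symm
      have h00 : f ^ (M' - 0) * (if (0 : ℕ) = 0 then r else if 0 - 1 < n then x (0 - 1) else 0)
          = f ^ t * (f ^ M * r) := by
        have h01 : (if (0 : ℕ) = 0 then r else if 0 - 1 < n then x (0 - 1) else 0) = r := by
          simp
        rw [h01, Nat.sub_zero, ← mul_assoc, ← pow_add, hM']
      rw [hsub2, h00, mul_add, Finset.mul_sum, add_comm]
      congr 1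
      refine Finset.sum_congr rfl fun k hk => ?_
      rw [Finset.mem_range] at hk
      rw [if_pos hk, ← mul_assoc, ← pow_add]
      congr 2
      omega
    have hB : ∑ k ∈ Finset.range (M' + 1), f ^ (M' - k) * (if k ≤ m then c k else 0)
        = f ^ t * (f ^ n * y) := by
      have hsub3 : ∑ k ∈ Finset.range (M' + 1), f ^ (M' - k) * (if k ≤ m then c k else 0)
          = ∑ k ∈ Finset.range (m + 1), f ^ (M' - k) * (if k ≤ m then c k else 0) :=
        (Finset.sum_subset (Finset.range_subset_range.mpr (by omega)) (fun k _ hk => by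
          rw [Finset.mem_range, not_lt] at hk
          rw [if_neg (by omega), mul_zero])).symm
      rw [hsub3, hyc, Finset.mul_sum, Finset.mul_sum]
      refine Finset.sum_congr rfl fun k hk => ?_
      rw [Finset.mem_range] at hk
      rw [if_pos (by omega), ← mul_assoc, ← mul_assoc, ← pow_add, ← pow_add]
      congr 2
      omega
    calc ∑ k ∈ Finset.range (M' + 1), f ^ (M' - k) * z k
        = (∑ k ∈ Finset.range (M' + 1), f ^ (M' - k) *
            (if k = 0 then r else if k - 1 < n then x (k - 1) else 0)) -
          ∑ k ∈ Finset.range (M' + 1), f ^ (M' - k) * (if k ≤ m then c k else 0) := by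
          rw [← Finset.sum_sub_distrib]
          refine Finset.sum_congr rfl fun k _ => ?_
          rw [hzdef]
          dsimp only
          ring
      _ = 0 := by rw [hA, hB, hceq, sub_self]
  obtain ⟨hz0N, hzkN⟩ := chainKey N f hreg M' z hzmem hzvan hsum
  -- r ∈ N
  have hrN : r ∈ N := by
    have hc0 : c 0 ∈ N := by simpa using hc 0
    have : r = z 0 + c 0 := by
      rw [hzdef]
      dsimp only
      rw [if_pos rfl, if_pos (by omega)]
      ring
    rw [this]
    exact Submodule.add_mem _ hz0N hc0
  -- each d k = 0
  have hdk : ∀ k, d k = 0 := by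
    intro k
    rcases le_or_gt n (k + 1) with hk | hk
    · exact hd0 k hk
    · have hxk : x k ∈ (N ^ (2 * (k + 1) + 1) ⊔ Ideal.span {f} * N ^ (2 * (k + 1)) : Ideal R) := by
        have hxeq : x k = z (k + 1) + (if k + 1 ≤ m then c (k + 1) else 0) := by
          rw [hzdef]
          dsimp only
          rw [if_neg (by omega), Nat.add_sub_cancel, if_pos (by omega)]
          ring
        rw [hxeq]
        refine Submodule.add_mem _ (hzkN k) ?_
        split
        · exact Submodule.mem_sup_left (hc (k + 1))
        · exact Submodule.zero_mem _
      rw [hdx k]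
      rw [Submodule.Quotient.mk_eq_zero]
      exact Submodule.mem_comap.mpr hxk
  have hdzero : d = 0 := by
    rw [← hd]
    refine Finset.sum_eq_zero fun k _ => ?_
    rw [hdk k, map_zero]
  rw [hdzero]
  have hq0 : Ideal.Quotient.mk N r = 0 := (Ideal.Quotient.eq_zero_iff_mem).mpr hrN
  rw [hq0]
  rfl

end inj

/-- let `R` be a commutative ring, `N` a nilpotent ideal and `f ∈ R` acting
injectively on each graded piece `N^i/N^{i+1}`.  In `S = R[1/f]`, set
`A = Σ_{k≥0} N^{2k}·f^{−k}` and `I = Σ_{k≥0} N^{2k+1}·f^{−k}`.  Then `I ⊆ A`, and the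
assignment `a₀ + a₂f^{−1} + a₄f^{−2} + ⋯ ↦ (a₀ mod N, (a_{2k} mod (N^{2k+1} + f·N^{2k}))_{k≥1})`
is a well-defined `R`-module isomorphism
`A/I ≅ (R/N) ⊕ ⊕_{k≥1} N^{2k}/(N^{2k+1} + f·N^{2k})`. -/
theorem stmt_17 {R : Type*} [CommRing R] (N : Ideal R) (hN : IsNilpotent N) (f : R)
    (hreg : ∀ (i : ℕ) (x : R), x ∈ N ^ i → f * x ∈ N ^ (i + 1) → x ∈ N ^ (i + 1)) :
    ID N f ≤ AD N f ∧
    ∃ e : (↥(AD N f) ⧸ (ID N f).comap (AD N f).subtype) ≃ₗ[R]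
        (R ⧸ N) × ⨁ (k : ℕ), gradedPiece N f (k + 1),
      (∀ (x : R) (hx : algebraMap R (Localization.Away f) x ∈ AD N f),
        e (Submodule.Quotient.mk ⟨algebraMap R (Localization.Away f) x, hx⟩) =
          (Ideal.Quotient.mk N x, 0)) ∧
      (∀ (k : ℕ) (x : R) (hx : x ∈ N ^ (2 * (k + 1))) (s : Localization.Away f)
          (hs : s * (algebraMap R (Localization.Away f) f) ^ (k + 1) =
            algebraMap R (Localization.Away f) x)
          (hsA : s ∈ AD N f),
        e (Submodule.Quotient.mk ⟨s, hsA⟩) =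
          (0, DirectSum.of (fun k => gradedPiece N f (k + 1)) k
            (Submodule.Quotient.mk ⟨x, hx⟩))) := by
  constructor
  · apply Submodule.span_mono
    rintro s ⟨k, x, hxmem, hs⟩
    exact ⟨k, x, Ideal.pow_le_pow_right (by omega) hxmem, hs⟩
  · have hbij : Function.Bijective (psi N f) := by
      constructor
      · intro a b hab
        have h0 : psi N f (a - b) = 0 := by
          have := (psi N f).toAddMonoidHom.map_sub a b
          exact this.trans (by simp [hab])
        exact sub_eq_zero.mp (psi_ker N f hN hreg _ h0)
      · exact psi_surj N f
    refine ⟨(LinearEquiv.ofBijective (psi N f) hbij).symm, ?_, ?_⟩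
    · intro x hxA
      rw [LinearEquiv.symm_apply_eq, LinearEquiv.ofBijective_apply, psi_mk_r]
    · intro k x hxk s hs hsA
      rw [LinearEquiv.symm_apply_eq, LinearEquiv.ofBijective_apply, psi_mk_of]
      have h1 : (algebraMap R (Localization.Away f) f * uinv f) ^ (k + 1) = 1 := by
        rw [fu, one_pow]
      have hseq : s = algebraMap R (Localization.Away f) x * uinv f ^ (k + 1) := by
        have h2 : s = s * ((algebraMap R (Localization.Away f) f) ^ (k + 1) *
            uinv f ^ (k + 1)) := by rw [← mul_pow, h1, mul_one]
        rw [← mul_assoc, hs] at h2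
        exact h2
      exact congrArg _ (Subtype.ext hseq)
end
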